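/- arXiv:1310.1312 — 3 statements merged into one kernel-verified Lean document; each statement's English description precedes it below -/
import Mathlib

section
/- For every n ≥ 1 and every probability vector λ = (λ_1, …, λ_n) with pairwise distinct, strictly positive entries, the closed-form expression for subentropy agrees with the integral expression: −Σ_{i=1}^n (λ_i^n / Π_{j ≠ i}(λ_i − λ_j)) · ln λ_i = n ∫_{Δ_n} η(λ·x) dx − C_n. -/
open MeasureTheory Matrix
open scoped ComplexOrder

/-- η(y) = −y ln y (with ln 0 = 0 in Mathlib, so 0 ln 0 = 0). -/
noncomputable def eta (y : ℝ) : ℝ := -(y * Real.log y)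

/-- C_n = 1/2 + 1/3 + ⋯ + 1/n (C_1 = 0). -/
noncomputable def harmC (n : ℕ) : ℝ := ∑ k ∈ Finset.Icc 2 n, (1 : ℝ) / k

/-- Integral of a function over the probability simplex Δ_n with respect to the
normalized uniform measure dx = (n−1)! dx_1 ⋯ dx_{n−1}, realised in the coordinates
(x_1, …, x_{n−1}), with x_n = 1 − (x_1 + ⋯ + x_{n−1}). -/
noncomputable def simplexIntegral (n : ℕ) (f : (Fin n → ℝ) → ℝ) : ℝ :=
  ((n - 1).factorial : ℝ) *
    ∫ y in {y : Fin (n - 1) → ℝ | (∀ i, 0 ≤ y i) ∧ ∑ i, y i ≤ 1},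
      f (fun i => if h : (i : ℕ) < n - 1 then y ⟨(i : ℕ), h⟩ else 1 - ∑ j, y j)

/-- Subentropy of a probability vector: F(λ) = n ∫_{Δ_n} η(λ·x) dx − C_n. -/
noncomputable def subF (n : ℕ) (lam : Fin n → ℝ) : ℝ :=
  (n : ℝ) * simplexIntegral n (fun x => eta (∑ i, lam i * x i)) - harmC n

/-- Subentropy of a (Hermitian) matrix: Q(ρ) = F(λ(ρ)), the subentropy of its
eigenvalue vector (junk value 0 for non-Hermitian matrices). -/
noncomputable def Qmat {ι : Type} [Fintype ι] [DecidableEq ι] (ρ : Matrix ι ι ℂ) : ℝ :=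
  if h : ρ.IsHermitian then
    subF (Fintype.card ι) (fun k => h.eigenvalues ((Fintype.equivFin ι).symm k))
  else 0

section Aux

open Finset Polynomial



noncomputable def dds (G : ℝ → ℝ) {ι : Type*} [DecidableEq ι] (v : ι → ℝ) (s : Finset ι) : ℝ :=
  ∑ i ∈ s, G (v i) / ∏ j ∈ s.erase i, (v i - v j)

lemma dds_image {ι κ : Type*} [DecidableEq ι] [DecidableEq κ] (G : ℝ → ℝ) (v : ι → ℝ)
    (φ : κ → ι) (hφ : Function.Injective φ) (s : Finset κ) :
    dds G (v ∘ φ) s = dds G v (s.image φ) := by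
  unfold dds
  rw [Finset.sum_image (fun a _ b _ h => hφ h)]
  refine Finset.sum_congr rfl fun i hi => ?_
  rw [← Finset.image_erase hφ, Finset.prod_image (fun a _ b _ h => hφ h)]
  rfl

lemma dds_rec {ι : Type*} [DecidableEq ι] (G : ℝ → ℝ) (v : ι → ℝ) (s : Finset ι)
    (hinj : Set.InjOn v s) {a b : ι} (ha : a ∈ s) (hb : b ∈ s) (hab : a ≠ b) :
    dds G v s = (dds G v (s.erase b) - dds G v (s.erase a)) / (v a - v b) := by
  classical
  have hvab : v a - v b ≠ 0 :=
    sub_ne_zero.2 fun h => hab (hinj ha hb h)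
  have hne : ∀ i ∈ s, ∀ j ∈ s, i ≠ j → v i - v j ≠ 0 := fun i hi j hj hij =>
    sub_ne_zero.2 fun h => hij (hinj hi hj h)
  have hprodne : ∀ i ∈ s, ∀ t, t ⊆ s.erase i → (∏ j ∈ t, (v i - v j)) ≠ 0 := by
    intro i hi t ht
    refine Finset.prod_ne_zero_iff.2 fun j hj => ?_
    exact hne i hi j (Finset.mem_of_mem_erase (ht hj)) (Ne.symm (Finset.ne_of_mem_erase (ht hj)))
  have hbea : b ∈ s.erase a := Finset.mem_erase.2 ⟨Ne.symm hab, hb⟩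
  have haeb : a ∈ s.erase b := Finset.mem_erase.2 ⟨hab, ha⟩
  have hcomm : (s.erase b).erase a = (s.erase a).erase b := Finset.erase_right_comm
  -- term for a
  have t1 : G (v a) / ∏ j ∈ s.erase a, (v a - v j)
      = (G (v a) / ∏ j ∈ (s.erase a).erase b, (v a - v j)) / (v a - v b) := by
    rw [← Finset.mul_prod_erase (s.erase a) _ hbea, div_div, mul_comm]
  -- term for b
  have t2 : G (v b) / ∏ j ∈ s.erase b, (v b - v j)
      = -(G (v b) / ∏ j ∈ (s.erase a).erase b, (v b - v j)) / (v a - v b) := by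
    rw [← Finset.mul_prod_erase (s.erase b) _ haeb, ← hcomm]
    have hQ : (∏ j ∈ (s.erase b).erase a, (v b - v j)) ≠ 0 :=
      hprodne b hb _ (fun j hj => Finset.mem_of_mem_erase hj)
    have h1 : v b - v a ≠ 0 := hne b hb a ha (Ne.symm hab)
    field_simp
    ring
  -- terms for i ∈ s2
  have t3 : ∀ i ∈ (s.erase a).erase b, G (v i) / ∏ j ∈ s.erase i, (v i - v j)
      = (G (v i) / ∏ j ∈ (s.erase b).erase i, (v i - v j)
        - G (v i) / ∏ j ∈ (s.erase a).erase i, (v i - v j)) / (v a - v b) := by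
    intro i hi
    have hib : i ≠ b := Finset.ne_of_mem_erase hi
    have hia : i ≠ a := Finset.ne_of_mem_erase (Finset.mem_of_mem_erase hi)
    have his : i ∈ s := Finset.mem_of_mem_erase (Finset.mem_of_mem_erase hi)
    have haei : a ∈ s.erase i := Finset.mem_erase.2 ⟨Ne.symm hia, ha⟩
    have hbei : b ∈ (s.erase i).erase a :=
      Finset.mem_erase.2 ⟨Ne.symm hab, Finset.mem_erase.2 ⟨Ne.symm hib, hb⟩⟩
    have haebi : a ∈ (s.erase b).erase i := Finset.mem_erase.2 ⟨Ne.symm hia, haeb⟩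
    have hbeai : b ∈ (s.erase a).erase i := Finset.mem_erase.2 ⟨Ne.symm hib, hbea⟩
    have e1 : ((s.erase b).erase i).erase a = ((s.erase i).erase a).erase b := by
      ext x; simp only [Finset.mem_erase]; tauto
    have e2 : ((s.erase a).erase i).erase b = ((s.erase i).erase a).erase b := by
      ext x; simp only [Finset.mem_erase]; tauto
    rw [← Finset.mul_prod_erase (s.erase i) _ haei,
        ← Finset.mul_prod_erase ((s.erase i).erase a) _ hbei,
        ← Finset.mul_prod_erase ((s.erase b).erase i) _ haebi,
        ← Finset.mul_prod_erase ((s.erase a).erase i) _ hbeai, e1, e2]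
    have hx : v i - v a ≠ 0 := hne i his a ha hia
    have hy : v i - v b ≠ 0 := hne i his b hb hib
    have hR : (∏ j ∈ ((s.erase i).erase a).erase b, (v i - v j)) ≠ 0 :=
      hprodne i his _ (fun j hj => Finset.mem_of_mem_erase (Finset.mem_of_mem_erase hj))
    field_simp
    ring
  -- assembly
  have E0 : dds G v s = G (v a) / ∏ j ∈ s.erase a, (v a - v j)
      + (G (v b) / ∏ j ∈ s.erase b, (v b - v j)
        + ∑ i ∈ (s.erase a).erase b, G (v i) / ∏ j ∈ s.erase i, (v i - v j)) := by
    rw [dds, ← Finset.add_sum_erase _ _ ha, ← Finset.add_sum_erase _ _ hbea]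
  have E1 : dds G v (s.erase b) = G (v a) / ∏ j ∈ (s.erase a).erase b, (v a - v j)
      + ∑ i ∈ (s.erase a).erase b, G (v i) / ∏ j ∈ (s.erase b).erase i, (v i - v j) := by
    rw [dds, ← Finset.add_sum_erase _ _ haeb, hcomm]
  have E2 : dds G v (s.erase a) = G (v b) / ∏ j ∈ (s.erase a).erase b, (v b - v j)
      + ∑ i ∈ (s.erase a).erase b, G (v i) / ∏ j ∈ (s.erase a).erase i, (v i - v j) := by
    rw [dds, ← Finset.add_sum_erase _ _ hbea]
  rw [E0, E1, E2, t1, t2, Finset.sum_congr rfl t3, ← Finset.sum_div, Finset.sum_sub_distrib]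
  generalize G (v a) / ∏ j ∈ (s.erase a).erase b, (v a - v j) = A
  generalize G (v b) / ∏ j ∈ (s.erase a).erase b, (v b - v j) = B
  generalize (∑ i ∈ (s.erase a).erase b, G (v i) / ∏ j ∈ (s.erase b).erase i, (v i - v j)) = S1
  generalize (∑ i ∈ (s.erase a).erase b, G (v i) / ∏ j ∈ (s.erase a).erase i, (v i - v j)) = S2
  field_simp
  ring



lemma basis_coeff {ι : Type*} [DecidableEq ι] (s : Finset ι) (v : ι → ℝ) (i : ι) (hi : i ∈ s) :
    (Lagrange.basis s v i).coeff (#s - 1) = (∏ j ∈ s.erase i, (v i - v j))⁻¹ := by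
  rw [Lagrange.basis]
  have : ∀ j ∈ s.erase i, Lagrange.basisDivisor (v i) (v j)
      = C (v i - v j)⁻¹ * (X - C (v j)) := fun j _ => rfl
  rw [Finset.prod_congr rfl this, Finset.prod_mul_distrib, ← map_prod]
  have hq : (∏ j ∈ s.erase i, (X - C (v j))).Monic :=
    monic_prod_of_monic _ _ fun j _ => monic_X_sub_C _
  have hd : (∏ j ∈ s.erase i, (X - C (v j))).natDegree = #s - 1 := by
    rw [natDegree_prod_of_monic _ _ fun j _ => monic_X_sub_C _]
    simp [Finset.card_erase_of_mem hi]
  rw [coeff_C_mul, ← hd, hq.coeff_natDegree, mul_one, ← Finset.prod_inv_distrib]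

lemma pow_dds_sum (m : ℕ) (v : Fin (m + 1) → ℝ) (hinj : Function.Injective v) :
    ∑ i, v i ^ (m + 1) / ∏ j ∈ Finset.univ.erase i, (v i - v j) = ∑ i, v i := by
  classical
  set s : Finset (Fin (m + 1)) := Finset.univ with hs
  have hcard : #s = m + 1 := by simp [hs]
  have hvs : Set.InjOn v ↑s := fun a _ b _ h => hinj h
  set p : ℝ[X] := X ^ (m + 1) - Lagrange.nodal s v with hp
  have hdeg : p.degree < (#s : ℕ) := by
    have h1 : (Lagrange.nodal s v).degree = ((m + 1 : ℕ) : WithBot ℕ) := by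
      rw [Lagrange.degree_nodal, hcard]
    have := Polynomial.degree_sub_lt (p := X ^ (m + 1)) (q := Lagrange.nodal s v)
      (by rw [degree_X_pow, h1]) (pow_ne_zero _ X_ne_zero)
      (by rw [leadingCoeff_X_pow, (Lagrange.nodal_monic).leadingCoeff])
    rw [degree_X_pow] at this
    rw [hcard]; exact this
  have heq : p = Lagrange.interpolate s v (fun i => p.eval (v i)) :=
    Lagrange.eq_interpolate hvs hdeg
  have hlhs : p.coeff m = ∑ i, v i := by
    have hc : (∏ i ∈ s, (X - C (v i))).coeff m = -∑ i ∈ s, v i := by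
      have := Polynomial.prod_X_sub_C_coeff_card_pred s v (by rw [hcard]; omega)
      rwa [hcard, Nat.add_sub_cancel] at this
    rw [hp, coeff_sub, coeff_X_pow, if_neg (by omega), Lagrange.nodal_eq, hc]
    simp [hs]
  have hev : ∀ i ∈ s, p.eval (v i) = v i ^ (m + 1) := by
    intro i hi
    rw [hp, eval_sub, eval_pow, eval_X, Lagrange.eval_nodal_at_node hi, sub_zero]
  have hrhs : (Lagrange.interpolate s v (fun i => p.eval (v i))).coeff m
      = ∑ i, v i ^ (m + 1) / ∏ j ∈ Finset.univ.erase i, (v i - v j) := by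
    rw [Lagrange.interpolate_apply, Polynomial.finset_sum_coeff]
    refine Finset.sum_congr rfl fun i hi => ?_
    rw [coeff_C_mul]
    have := basis_coeff s v i hi
    rw [hcard] at this
    simp only [Nat.add_sub_cancel] at this
    rw [this, hev i hi, div_eq_mul_inv]
  rw [← hlhs, heq, hrhs]



noncomputable def Gfun (k : ℕ) (y : ℝ) : ℝ :=
  (harmC k * y ^ k - y ^ k * Real.log y) / k.factorial

lemma harmC_succ {k : ℕ} (hk : 1 ≤ k) : harmC (k + 1) = harmC k + 1 / (k + 1) := by
  rw [harmC, harmC, Finset.sum_Icc_succ_top (by omega)]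
  push_cast
  ring

lemma continuous_Gfun {k : ℕ} (hk : 1 ≤ k) : Continuous (Gfun k) := by
  obtain ⟨j, rfl⟩ : ∃ j, k = j + 1 := ⟨k - 1, by omega⟩
  have h : (fun y : ℝ => y ^ (j + 1) * Real.log y)
      = fun y : ℝ => y ^ j * (y * Real.log y) := by
    funext y; rw [pow_succ]; ring
  unfold Gfun
  exact (((continuous_const.mul (continuous_pow _))).sub
    (h ▸ (continuous_pow j).mul Real.continuous_mul_log)).div_const _

lemma hasDerivAt_Gfun {k : ℕ} (hk : 1 ≤ k) {x : ℝ} (hx : 0 < x) :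
    HasDerivAt (Gfun (k + 1)) (Gfun k x) x := by
  have h1 : HasDerivAt (fun y : ℝ => y ^ (k + 1)) ((k + 1) * x ^ k) x := by
    simpa using hasDerivAt_pow (k + 1) x
  have h2 : HasDerivAt (fun y : ℝ => y ^ (k + 1) * Real.log y)
      ((k + 1) * x ^ k * Real.log x + x ^ (k + 1) * x⁻¹) x :=
    h1.mul (Real.hasDerivAt_log hx.ne')
  have h3 : HasDerivAt (Gfun (k + 1))
      ((harmC (k + 1) * ((k + 1) * x ^ k)
        - ((k + 1) * x ^ k * Real.log x + x ^ (k + 1) * x⁻¹)) / (k + 1).factorial) x :=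
    ((h1.const_mul _).sub h2).div_const _
  convert h3 using 1
  rw [harmC_succ hk, Gfun]
  have hxk : x ^ (k + 1) * x⁻¹ = x ^ k := by
    rw [pow_succ, mul_assoc, mul_inv_cancel₀ hx.ne', mul_one]
  rw [hxk, Nat.factorial_succ]
  have hf : (k.factorial : ℝ) ≠ 0 := Nat.cast_ne_zero.2 k.factorial_ne_zero
  have hk1 : ((k : ℝ) + 1) ≠ 0 := by positivity
  push_cast
  field_simp
  ring

inductive AD : ℕ → (ℝ → ℝ) → (ℝ → ℝ) → Prop
  | zero (g : ℝ → ℝ) (hg : Continuous g) : AD 0 g g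
  | succ (m : ℕ) (g G1 G : ℝ → ℝ) (hg : Continuous g)
      (hder : ∀ x : ℝ, 0 < x → HasDerivAt G1 (g x) x) (h : AD m G1 G) : AD (m + 1) g G

lemma AD.cont {m : ℕ} {g G : ℝ → ℝ} (h : AD m g G) : Continuous g := by
  cases h with
  | zero g hg => exact hg
  | succ m g G1 G hg hder h => exact hg

lemma AD_Gfun (m : ℕ) : ∀ k, 1 ≤ k → AD m (Gfun k) (Gfun (k + m)) := by
  induction m with
  | zero => exact fun k hk => AD.zero _ (continuous_Gfun hk)
  | succ m ih =>
    intro k hk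
    have h := ih (k + 1) (by omega)
    have : k + 1 + m = k + (m + 1) := by omega
    rw [this] at h
    exact AD.succ m _ (Gfun (k + 1)) _ (continuous_Gfun hk)
      (fun x hx => hasDerivAt_Gfun hk hx) h



def Smp (m : ℕ) : Set (Fin m → ℝ) := {y | (∀ i, 0 ≤ y i) ∧ ∑ i, y i ≤ 1}

lemma measurableSet_Smp (m : ℕ) : MeasurableSet (Smp m) := by
  have : Smp m = (⋂ i, {y : Fin m → ℝ | 0 ≤ y i}) ∩ {y | ∑ i, y i ≤ 1} := by
    ext y; simp [Smp, Set.mem_iInter]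
  rw [this]
  exact (MeasurableSet.iInter fun i =>
      measurableSet_le measurable_const (measurable_pi_apply i)).inter
    (measurableSet_le (Finset.measurable_sum _ fun i _ => measurable_pi_apply i) measurable_const)

lemma isCompact_Smp (m : ℕ) : IsCompact (Smp m) := by
  have hclosed : IsClosed (Smp m) := by
    have : Smp m = (⋂ i, {y : Fin m → ℝ | 0 ≤ y i}) ∩ {y | ∑ i, y i ≤ 1} := by
      ext y; simp [Smp, Set.mem_iInter]
    rw [this]
    exact (isClosed_iInter fun i =>
        isClosed_le continuous_const (continuous_apply i)).inter
      (isClosed_le (by fun_prop) continuous_const)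
  refine IsCompact.of_isClosed_subset (isCompact_Icc (a := fun _ => (0:ℝ)) (b := fun _ => 1)) hclosed ?_
  rintro y ⟨h0, h1⟩
  refine Set.mem_Icc.2 ⟨fun i => h0 i, fun i => ?_⟩
  calc y i ≤ ∑ j, y j := Finset.single_le_sum (fun j _ => h0 j) (Finset.mem_univ i)
  _ ≤ 1 := h1

lemma mem_Smp_snoc {m : ℕ} {y : Fin m → ℝ} {t : ℝ} (hy : ∀ i, 0 ≤ y i) (ht : 0 ≤ t)
    (hts : t + ∑ i, y i ≤ 1) : Fin.snoc y t ∈ Smp (m + 1) := by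
  constructor
  · intro i
    refine Fin.lastCases ?_ ?_ i
    · rw [Fin.snoc_last]; exact ht
    · intro j; rw [Fin.snoc_castSucc]; exact hy j
  · rw [Fin.sum_univ_castSucc]
    simp only [Fin.snoc_castSucc, Fin.snoc_last]
    linarith

lemma snoc_sum {m : ℕ} (μ : Fin (m + 1) → ℝ) (y : Fin m → ℝ) (t : ℝ) :
    ∑ i, μ i * (Fin.snoc y t : Fin (m+1) → ℝ) i
      = ∑ i, μ i.castSucc * y i + μ (Fin.last m) * t := by
  rw [Fin.sum_univ_castSucc]
  simp only [Fin.snoc_castSucc, Fin.snoc_last]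

noncomputable def Kint (m : ℕ) (a : ℝ) (μ : Fin m → ℝ) (g : ℝ → ℝ) : ℝ :=
  ∫ y in Smp m, g (a + ∑ i, μ i * y i)

lemma Kint_zero (a : ℝ) (μ : Fin 0 → ℝ) (g : ℝ → ℝ) : Kint 0 a μ g = g a := by
  have h1 : Smp 0 = Set.univ := by
    ext y; simp [Smp]
  have h2 : (volume : Measure (Fin 0 → ℝ)) Set.univ = 1 := by
    rw [volume_pi, Measure.pi_univ]; simp
  rw [Kint, h1]
  simp only [Finset.univ_eq_empty, Finset.sum_empty, add_zero]
  rw [setIntegral_const, Measure.real, h2]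
  simp

lemma arg_pos {m : ℕ} {a : ℝ} {μ : Fin m → ℝ} (ha : 0 < a) (hμ : ∀ i, 0 < a + μ i)
    {y : Fin m → ℝ} (hy : y ∈ Smp m) : 0 < a + ∑ i, μ i * y i := by
  obtain ⟨h0, h1⟩ := hy
  have key : a + ∑ i, μ i * y i = a * (1 - ∑ i, y i) + ∑ i, (a + μ i) * y i := by
    simp only [add_mul, Finset.sum_add_distrib, ← Finset.mul_sum]
    ring
  rcases lt_or_eq_of_le h1 with h | h
  · rw [key]
    have t1 : 0 < a * (1 - ∑ i, y i) := mul_pos ha (by linarith)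
    have t2 : 0 ≤ ∑ i, (a + μ i) * y i :=
      Finset.sum_nonneg fun i _ => mul_nonneg (hμ i).le (h0 i)
    linarith
  · have : ∃ i, 0 < y i := by
      by_contra hc
      push_neg at hc
      have := Finset.sum_nonpos (fun i (_ : i ∈ Finset.univ) => hc i)
      rw [h] at this
      linarith
    obtain ⟨i, hi⟩ := this
    rw [key, ← h]
    have t2 : (a + μ i) * y i ≤ ∑ j, (a + μ j) * y j :=
      Finset.single_le_sum (fun j _ => mul_nonneg (hμ j).le (h0 j)) (Finset.mem_univ i)
    have := mul_pos (hμ i) hi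
    simp only [sub_self, mul_zero, zero_add]
    linarith

lemma Kint_succ (m : ℕ) (a : ℝ) (μ : Fin (m + 1) → ℝ) (g G1 : ℝ → ℝ)
    (hg : Continuous g) (hG1 : Continuous G1)
    (hder : ∀ x : ℝ, 0 < x → HasDerivAt G1 (g x) x)
    (ha : 0 < a) (hμ : ∀ i, 0 < a + μ i) (hL : μ (Fin.last m) ≠ 0) :
    Kint (m + 1) a μ g
      = (Kint m (a + μ (Fin.last m)) (fun i => μ i.castSucc - μ (Fin.last m)) G1
        - Kint m a (fun i => μ i.castSucc) G1) / μ (Fin.last m) := by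
  classical
  set L := μ (Fin.last m) with hLdef
  set E : Set (ℝ × (Fin m → ℝ)) :=
    {z | z.2 ∈ Smp m ∧ z.1 ∈ Set.Icc 0 (1 - ∑ i, z.2 i)} with hE
  set h : ℝ × (Fin m → ℝ) → ℝ :=
    fun z => g (a + (∑ i, μ i.castSucc * z.2 i + L * z.1)) with hh
  have hcont : Continuous h := by
    apply hg.comp
    exact continuous_const.add ((continuous_finset_sum _ fun i _ =>
      (continuous_const.mul ((continuous_apply i).comp continuous_snd))).add
      (continuous_const.mul continuous_fst))
  have hEmeas : MeasurableSet E := by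
    have : E = (Prod.snd ⁻¹' Smp m) ∩
        ({z : ℝ × (Fin m → ℝ) | 0 ≤ z.1} ∩ {z | z.1 ≤ 1 - ∑ i, z.2 i}) := by
      ext z; simp [hE, Set.mem_Icc, and_assoc]
    rw [this]
    refine ((measurableSet_Smp m).preimage measurable_snd).inter
      ((measurableSet_le measurable_const measurable_fst).inter
        (measurableSet_le measurable_fst ?_))
    exact measurable_const.sub
      (Finset.measurable_sum _ fun i _ => (measurable_pi_apply i).comp measurable_snd)
  have hEsub : E ⊆ Set.Icc ((0 : ℝ), (fun _ => 0 : Fin m → ℝ)) (1, fun _ => 1) := by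
    rintro ⟨t, y⟩ ⟨⟨hy0, hy1⟩, ht⟩
    obtain ⟨ht0, ht1⟩ := ht
    have hs0 : 0 ≤ ∑ i, y i := Finset.sum_nonneg fun i _ => hy0 i
    constructor
    · exact ⟨ht0, fun i => hy0 i⟩
    · constructor
      · simp only; linarith
      · intro i
        simp only
        calc y i ≤ ∑ j, y j := Finset.single_le_sum (fun j _ => hy0 j) (Finset.mem_univ i)
        _ ≤ 1 := hy1
  have hIntE : IntegrableOn h E := by
    refine (hcont.continuousOn.integrableOn_compact isCompact_Icc).mono_set hEsub
  have hInd : Integrable (E.indicator h) ((volume : Measure ℝ).prod volume) := by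
    rw [← Measure.volume_eq_prod]
    exact (integrable_indicator_iff hEmeas).2 hIntE
  -- step A : transport
  have hsymm : ∀ z : ℝ × (Fin m → ℝ),
      (MeasurableEquiv.piFinSuccAbove (fun _ : Fin (m + 1) => ℝ) (Fin.last m)).symm z
        = Fin.snoc z.2 z.1 := by
    intro z
    rw [MeasurableEquiv.piFinSuccAbove_symm_apply]
    exact Fin.insertNth_last' z.1 z.2
  have hpre : (MeasurableEquiv.piFinSuccAbove (fun _ : Fin (m + 1) => ℝ) (Fin.last m)).symm ⁻¹'
      (Smp (m + 1)) = E := by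
    ext z
    rw [Set.mem_preimage, hsymm]
    constructor
    · rintro ⟨h0, h1⟩
      rw [Fin.sum_univ_castSucc] at h1
      simp only [Fin.snoc_castSucc, Fin.snoc_last] at h1
      have hz1 : 0 ≤ z.1 := by have := h0 (Fin.last m); rwa [Fin.snoc_last] at this
      have hy0 : ∀ i, 0 ≤ z.2 i := fun i => by
        have := h0 i.castSucc; rwa [Fin.snoc_castSucc] at this
      exact ⟨⟨hy0, by linarith⟩, ⟨hz1, by linarith⟩⟩
    · rintro ⟨⟨hy0, hy1⟩, ht0, ht1⟩
      exact mem_Smp_snoc hy0 ht0 (by linarith)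
  have step1 : Kint (m + 1) a μ g = ∫ z in E, h z := by
    rw [Kint, ← ((volume_preserving_piFinSuccAbove (fun _ : Fin (m + 1) => ℝ)
      (Fin.last m)).symm _).map_eq, setIntegral_map_equiv, hpre]
    refine setIntegral_congr_fun hEmeas fun z _ => ?_
    rw [hsymm, snoc_sum]
  -- step B : Fubini
  have hfiber : ∀ y' : Fin m → ℝ, (∫ t, E.indicator h (t, y'))
      = Set.indicator (Smp m)
          (fun w => ∫ t in Set.Icc 0 (1 - ∑ i, w i), h (t, w)) y' := by
    intro y'
    by_cases hy : y' ∈ Smp m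
    · rw [Set.indicator_of_mem hy]
      have heq : (fun t => E.indicator h (t, y'))
          = (Set.Icc 0 (1 - ∑ i, y' i)).indicator (fun t => h (t, y')) := by
        funext t
        by_cases ht : t ∈ Set.Icc (0:ℝ) (1 - ∑ i, y' i)
        · rw [Set.indicator_of_mem (show (t, y') ∈ E from ⟨hy, ht⟩),
            Set.indicator_of_mem ht]
        · rw [Set.indicator_of_notMem (fun hmem => ht hmem.2),
            Set.indicator_of_notMem ht]
      rw [heq, integral_indicator measurableSet_Icc]
    · rw [Set.indicator_of_notMem hy]
      have heq : (fun t => E.indicator h (t, y')) = fun _ => (0:ℝ) :=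
        funext fun t => Set.indicator_of_notMem (fun hmem => hy hmem.1) _
      rw [heq, integral_zero]
  have step2 : ∫ z in E, h z
      = ∫ y' in Smp m, ∫ t in Set.Icc 0 (1 - ∑ i, y' i), h (t, y') := by
    rw [← integral_indicator hEmeas, Measure.volume_eq_prod, integral_prod_symm _ hInd]
    calc ∫ y', ∫ t, E.indicator h (t, y')
        = ∫ y', Set.indicator (Smp m)
            (fun w => ∫ t in Set.Icc 0 (1 - ∑ i, w i), h (t, w)) y' := by
          exact integral_congr_ae (Filter.Eventually.of_forall hfiber)
      _ = _ := integral_indicator (measurableSet_Smp m)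
  -- positivity of arguments
  have hpos' : ∀ y' ∈ Smp m, ∀ t ∈ Set.Icc (0:ℝ) (1 - ∑ i, y' i),
      0 < a + (∑ i, μ i.castSucc * y' i + L * t) := by
    intro y' hy t ht
    have hmem := mem_Smp_snoc hy.1 ht.1 (by have := ht.2; linarith)
    have := arg_pos ha hμ hmem
    rwa [snoc_sum] at this
  -- step C : FTC in the inner integral
  have step3 : ∀ y' ∈ Smp m, (∫ t in Set.Icc 0 (1 - ∑ i, y' i), h (t, y'))
      = L⁻¹ * G1 ((a + L) + ∑ i, (μ i.castSucc - L) * y' i)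
        - L⁻¹ * G1 (a + ∑ i, μ i.castSucc * y' i) := by
    intro y' hy
    have hc0 : (0:ℝ) ≤ 1 - ∑ i, y' i := by have := hy.2; linarith
    have hIcc : (∫ t in Set.Icc (0:ℝ) (1 - ∑ i, y' i), h (t, y'))
        = ∫ t in (0:ℝ)..(1 - ∑ i, y' i), h (t, y') := by
      rw [intervalIntegral.integral_of_le hc0, integral_Icc_eq_integral_Ioc]
    have hF : ∀ t ∈ Set.uIcc (0:ℝ) (1 - ∑ i, y' i),
        HasDerivAt (fun u => L⁻¹ * G1 ((a + ∑ i, μ i.castSucc * y' i) + L * u))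
          (h (t, y')) t := by
      intro t ht
      rw [Set.uIcc_of_le hc0] at ht
      have hpt : 0 < (a + ∑ i, μ i.castSucc * y' i) + L * t := by
        have := hpos' y' hy t ht
        linarith [this]
      have hlin : HasDerivAt (fun u : ℝ => (a + ∑ i, μ i.castSucc * y' i) + L * u) L t := by
        simpa using ((hasDerivAt_id t).const_mul L).const_add (a + ∑ i, μ i.castSucc * y' i)
      have hcomp := ((hder _ hpt).comp t hlin).const_mul L⁻¹
      refine hcomp.congr_deriv ?_
      have harg : a + (∑ i, μ i.castSucc * y' i + L * t)
          = (a + ∑ i, μ i.castSucc * y' i) + L * t := by ring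
      rw [hh]
      simp only [harg]
      field_simp
    have hint : IntervalIntegrable (fun t => h (t, y')) volume 0 (1 - ∑ i, y' i) :=
      (hcont.comp (continuous_id.prodMk continuous_const)).intervalIntegrable _ _
    rw [hIcc, intervalIntegral.integral_eq_sub_of_hasDerivAt hF hint]
    rw [mul_zero, add_zero]
    congr 2
    simp only [sub_mul]
    rw [Finset.sum_sub_distrib, ← Finset.mul_sum]
    ring
  -- step D : assemble
  have hI1 : IntegrableOn
      (fun y' : Fin m → ℝ => L⁻¹ * G1 ((a + L) + ∑ i, (μ i.castSucc - L) * y' i))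
      (Smp m) := by
    refine (Continuous.continuousOn ?_).integrableOn_compact (isCompact_Smp m)
    exact continuous_const.mul (hG1.comp (continuous_const.add
      (continuous_finset_sum _ fun i _ => continuous_const.mul (continuous_apply i))))
  have hI2 : IntegrableOn
      (fun y' : Fin m → ℝ => L⁻¹ * G1 (a + ∑ i, μ i.castSucc * y' i)) (Smp m) := by
    refine (Continuous.continuousOn ?_).integrableOn_compact (isCompact_Smp m)
    exact continuous_const.mul (hG1.comp (continuous_const.add
      (continuous_finset_sum _ fun i _ => continuous_const.mul (continuous_apply i))))
  rw [step1, step2, setIntegral_congr_fun (measurableSet_Smp m) step3,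
    integral_sub hI1 hI2, integral_const_mul, integral_const_mul]
  rw [Kint, Kint]
  field_simp

lemma Kint_eq_sum : ∀ (m : ℕ) (ν : Fin (m + 1) → ℝ), (∀ i, 0 < ν i) → Function.Injective ν →
    ∀ g G : ℝ → ℝ, AD m g G →
    Kint m (ν (Fin.last m)) (fun i => ν i.castSucc - ν (Fin.last m)) g
      = dds G ν Finset.univ := by
  intro m
  induction m with
  | zero =>
    intro ν hpos hinj g G hAD
    cases hAD with
    | zero g hg =>
      rw [Kint_zero]
      simp [dds]
  | succ m ih =>
    intro ν hpos hinj g G hAD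
    cases hAD with
    | succ m g G1 G hg hder hAD' =>
      set a := ν (Fin.last (m + 1)) with hadef
      set μ : Fin (m + 1) → ℝ := fun i => ν i.castSucc - a with hmudef
      have hμpos : ∀ i, 0 < a + μ i := by
        intro i
        have := hpos i.castSucc
        simp only [hmudef]
        linarith
      have hL : μ (Fin.last m) ≠ 0 := by
        simp only [hmudef]
        exact sub_ne_zero.2 fun h => (Fin.castSucc_lt_last (Fin.last m)).ne (hinj h)
      have hrec := Kint_succ m a μ g G1 hg hAD'.cont hder (hpos _) hμpos hL
      -- first term: nodes ν ∘ castSucc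
      set w1 : Fin (m + 1) → ℝ := fun i => ν i.castSucc with hw1def
      have e1 : a + μ (Fin.last m) = w1 (Fin.last m) := by simp [hmudef, hw1def]
      have e2 : (fun i : Fin m => μ i.castSucc - μ (Fin.last m))
          = fun i => w1 i.castSucc - w1 (Fin.last m) := by
        funext i; simp [hmudef, hw1def]
      have hih1 : Kint m (a + μ (Fin.last m))
            (fun i => μ i.castSucc - μ (Fin.last m)) G1
          = dds G ν (Finset.univ.erase (Fin.last (m + 1))) := by
        rw [e1, e2, ih w1 (fun i => hpos _) (hinj.comp (Fin.castSucc_injective _)) G1 G hAD']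
        have : dds G w1 Finset.univ = dds G (ν ∘ Fin.castSucc) Finset.univ := rfl
        rw [this, dds_image G ν _ (Fin.castSucc_injective _)]
        congr 1
        ext x
        simp only [Finset.mem_image, Finset.mem_univ, true_and, Finset.mem_erase]
        constructor
        · rintro ⟨k, rfl⟩
          exact ⟨(Fin.castSucc_lt_last k).ne, trivial⟩
        · rintro ⟨hx, -⟩
          have hlt : (x : ℕ) < m + 1 := by
            rcases lt_or_eq_of_le (Nat.lt_succ_iff.mp x.isLt) with h | h
            · exact h
            · exact absurd (Fin.ext h : x = Fin.last (m + 1)) hx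
          exact ⟨⟨x, hlt⟩, Fin.ext rfl⟩
      -- second term: nodes ν ∘ φ₂
      set φ₂ : Fin (m + 1) → Fin (m + 2) :=
        Fin.snoc (fun i : Fin m => i.castSucc.castSucc) (Fin.last (m + 1)) with hphidef
      have hval : ∀ i : Fin (m + 1),
          (φ₂ i : ℕ) = if i = Fin.last m then m + 1 else (i : ℕ) := by
        intro i
        refine Fin.lastCases ?_ ?_ i
        · simp [hphidef]
        · intro j
          rw [hphidef]
          simp only [Fin.snoc_castSucc]
          rw [if_neg (Fin.castSucc_lt_last j).ne]
          simp
      have hφinj : Function.Injective φ₂ := by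
        intro i j hij
        have h := congrArg Fin.val hij
        rw [hval i, hval j] at h
        by_cases hi : i = Fin.last m <;> by_cases hj : j = Fin.last m
        · rw [hi, hj]
        · rw [if_pos hi, if_neg hj] at h
          have : (j : ℕ) < m + 1 := j.isLt
          omega
        · rw [if_neg hi, if_pos hj] at h
          have : (i : ℕ) < m + 1 := i.isLt
          omega
        · rw [if_neg hi, if_neg hj] at h
          exact Fin.ext h
      have himg : Finset.image φ₂ Finset.univ
          = Finset.univ.erase ((Fin.last m).castSucc) := by
        ext x
        simp only [Finset.mem_image, Finset.mem_univ, true_and, Finset.mem_erase]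
        constructor
        · rintro ⟨k, rfl⟩
          refine ⟨fun hc => ?_, trivial⟩
          have h := congrArg Fin.val hc
          rw [hval k] at h
          simp only [Fin.coe_castSucc, Fin.val_last] at h
          by_cases hk : k = Fin.last m
          · rw [if_pos hk] at h; omega
          · rw [if_neg hk] at h
            have : (k : ℕ) ≠ m := fun hh => hk (Fin.ext hh)
            omega
        · rintro ⟨hx, -⟩
          have hxm : (x : ℕ) ≠ m := fun hh => hx (Fin.ext (by simpa using hh))
          rcases Nat.lt_or_ge (x : ℕ) m with h | h
          · refine ⟨(⟨x, h⟩ : Fin m).castSucc, Fin.ext ?_⟩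
            rw [hval]
            rw [if_neg (Fin.castSucc_lt_last _).ne]
            simp
          · have : (x : ℕ) = m + 1 := by have := x.isLt; omega
            exact ⟨Fin.last m, Fin.ext (by rw [hval, if_pos rfl, this])⟩
      set w2 : Fin (m + 1) → ℝ := fun i => ν (φ₂ i) with hw2def
      have e3 : a = w2 (Fin.last m) := by simp [hw2def, hphidef, hadef]
      have e4 : (fun i : Fin m => μ i.castSucc)
          = fun i => w2 i.castSucc - w2 (Fin.last m) := by
        funext i; simp [hmudef, hw2def, hphidef, hadef]
      have hih2 : Kint m a (fun i => μ i.castSucc) G1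
          = dds G ν (Finset.univ.erase ((Fin.last m).castSucc)) := by
        rw [show Kint m a (fun i => μ i.castSucc) G1
            = Kint m (w2 (Fin.last m)) (fun i => w2 i.castSucc - w2 (Fin.last m)) G1 by
          rw [← e4, ← e3]]
        rw [ih w2 (fun i => hpos _) (hinj.comp hφinj) G1 G hAD']
        have : dds G w2 Finset.univ = dds G (ν ∘ φ₂) Finset.univ := rfl
        rw [this, dds_image G ν _ hφinj, himg]
      -- combine with dds_rec
      have hdds := dds_rec G ν Finset.univ (fun x _ y _ h => hinj h)
        (Finset.mem_univ ((Fin.last m).castSucc)) (Finset.mem_univ (Fin.last (m + 1)))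
        (Fin.castSucc_lt_last (Fin.last m)).ne
      rw [hrec, hih1, hih2, hdds]

end Aux

/-- for a probability vector with pairwise distinct, strictly positive
entries, the closed-form expression for subentropy agrees with the integral expression. -/
theorem subentropy_closed_form_eq_integral (n : ℕ) (hn : 1 ≤ n) (lam : Fin n → ℝ)
    (hpos : ∀ i, 0 < lam i) (hsum : ∑ i, lam i = 1)
    (hdist : ∀ i j, i ≠ j → lam i ≠ lam j) :
    -∑ i, (lam i ^ n / ∏ j ∈ Finset.univ.erase i, (lam i - lam j)) * Real.log (lam i)
      = (n : ℝ) * simplexIntegral n (fun x => eta (∑ i, lam i * x i)) - harmC n := by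
  obtain ⟨m, rfl⟩ : ∃ m, n = m + 1 := ⟨n - 1, (Nat.succ_pred_eq_of_pos hn).symm⟩
  have hinj : Function.Injective lam := fun i j h => by
    by_contra hne
    exact hdist i j hne h
  have heta : eta = Gfun 1 := by
    funext y
    have h0 : harmC 1 = 0 := by
      rw [harmC]
      rw [show Finset.Icc 2 1 = ∅ from rfl]
      simp
    rw [eta, Gfun, h0]
    simp
  have hprodne : ∀ i : Fin (m + 1),
      (∏ j ∈ Finset.univ.erase i, (lam i - lam j)) ≠ 0 := by
    intro i
    refine Finset.prod_ne_zero_iff.2 fun j hj => sub_ne_zero.2 ?_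
    exact hdist i j (Ne.symm (Finset.ne_of_mem_erase hj))
  have harg : ∀ y : Fin m → ℝ,
      (∑ i : Fin (m + 1), lam i *
        (fun i : Fin (m + 1) => if h : (i : ℕ) < m then y ⟨(i : ℕ), h⟩
          else 1 - ∑ j, y j) i)
      = lam (Fin.last m) + ∑ i : Fin m,
          (lam i.castSucc - lam (Fin.last m)) * y i := by
    intro y
    rw [Fin.sum_univ_castSucc]
    have h1 : ∀ i : Fin m, (fun i : Fin (m + 1) => if h : (i : ℕ) < m then y ⟨(i : ℕ), h⟩
        else 1 - ∑ j, y j) i.castSucc = y i := by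
      intro i
      simp only [Fin.coe_castSucc]
      rw [dif_pos i.isLt]
    have h2 : (fun i : Fin (m + 1) => if h : (i : ℕ) < m then y ⟨(i : ℕ), h⟩
        else 1 - ∑ j, y j) (Fin.last m) = 1 - ∑ j, y j := by
      simp only [Fin.val_last]
      rw [dif_neg (lt_irrefl m)]
    rw [Finset.sum_congr rfl fun i _ => by rw [h1 i], h2]
    simp only [sub_mul]
    rw [Finset.sum_sub_distrib, ← Finset.mul_sum]
    ring
  have hchain : AD m (Gfun 1) (Gfun (m + 1)) := by
    have := AD_Gfun m 1 le_rfl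
    rwa [add_comm] at this
  have hKS := Kint_eq_sum m lam hpos hinj (Gfun 1) (Gfun (m + 1)) hchain
  have hsimp : simplexIntegral (m + 1) (fun x => eta (∑ i, lam i * x i))
      = (m.factorial : ℝ) * dds (Gfun (m + 1)) lam Finset.univ := by
    rw [simplexIntegral]
    congr 1
    have heq : (fun y : Fin m → ℝ =>
        eta (∑ i : Fin (m + 1), lam i *
          (fun i : Fin (m + 1) => if h : (i : ℕ) < m then y ⟨(i : ℕ), h⟩
            else 1 - ∑ j, y j) i))
        = fun y : Fin m → ℝ => Gfun 1 (lam (Fin.last m)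
            + ∑ i : Fin m, (lam i.castSucc - lam (Fin.last m)) * y i) := by
      funext y
      rw [harg y, heta]
    show (∫ y in Smp m, eta (∑ i : Fin (m + 1), lam i *
        (fun i : Fin (m + 1) => if h : (i : ℕ) < m then y ⟨(i : ℕ), h⟩
          else 1 - ∑ j, y j) i)) = dds (Gfun (m + 1)) lam Finset.univ
    rw [show (fun y : Fin m → ℝ => eta (∑ i : Fin (m + 1), lam i *
        (fun i : Fin (m + 1) => if h : (i : ℕ) < m then y ⟨(i : ℕ), h⟩
          else 1 - ∑ j, y j) i)) = fun y : Fin m → ℝ => Gfun 1 (lam (Fin.last m)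
            + ∑ i : Fin m, (lam i.castSucc - lam (Fin.last m)) * y i) from heq]
    exact hKS
  have hP : ∑ i, lam i ^ (m + 1) / ∏ j ∈ Finset.univ.erase i, (lam i - lam j) = 1 := by
    rw [pow_dds_sum m lam hinj, hsum]
  have key : ∀ i : Fin (m + 1),
      ((m + 1 : ℕ) : ℝ) * ((m.factorial : ℝ)
          * (Gfun (m + 1) (lam i) / ∏ j ∈ Finset.univ.erase i, (lam i - lam j)))
        = harmC (m + 1) * (lam i ^ (m + 1) / ∏ j ∈ Finset.univ.erase i, (lam i - lam j))
          - (lam i ^ (m + 1) / ∏ j ∈ Finset.univ.erase i, (lam i - lam j))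
              * Real.log (lam i) := by
    intro i
    rw [Gfun, Nat.factorial_succ]
    have hf : ((m.factorial : ℝ)) ≠ 0 := Nat.cast_ne_zero.2 m.factorial_ne_zero
    have hPr := hprodne i
    have hm1 : ((m : ℝ) + 1) ≠ 0 := by positivity
    push_cast
    field_simp
  rw [hsimp, dds, Finset.mul_sum, Finset.mul_sum,
    Finset.sum_congr rfl fun i _ => key i, Finset.sum_sub_distrib, ← Finset.mul_sum, hP,
    mul_one]
  ring
end

section
/- For every n ≥ 1, −n ∫_{Δ_n} x_1 ln x_1 dx = C_n, where x_1 denotes the first coordinate on the simplex. Equivalently, the subentropy of the point-mass probability vector (1, 0, …, 0) is zero: F(1,0,…,0) = 0. -/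
open MeasureTheory Matrix
open scoped ComplexOrder ENNReal

def simSet (k : ℕ) (r : ℝ) : Set (Fin k → ℝ) := {y | (∀ i, 0 ≤ y i) ∧ ∑ i, y i ≤ r}

lemma measurableSet_simSet (k : ℕ) (r : ℝ) : MeasurableSet (simSet k r) := by
  have : simSet k r = (⋂ i, {y : Fin k → ℝ | 0 ≤ y i}) ∩ {y | ∑ i, y i ≤ r} := by
    ext y; simp [simSet, Set.mem_iInter]
  rw [this]
  exact (MeasurableSet.iInter fun i =>
      measurableSet_le measurable_const (measurable_pi_apply i)).inter
    (measurableSet_le (Finset.measurable_sum _ fun i _ => measurable_pi_apply i) measurable_const)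

lemma simSet_neg {k : ℕ} {r : ℝ} (hr : r < 0) : simSet k r = ∅ := by
  ext y
  simp only [simSet, Set.mem_setOf_eq, Set.mem_empty_iff_false, iff_false, not_and]
  intro h hs
  exact absurd (le_trans (Finset.sum_nonneg fun i _ => h i) hs) (not_le.mpr hr)

-- push through piFinSuccAbove: generic slice lemma
lemma lintegral_simSet_succ (k : ℕ) (r : ℝ) (G : ℝ → ℝ≥0∞) (hG : Measurable G) :
    (∫⁻ y in simSet (k+1) r, G (y 0)) =
      ∫⁻ t : ℝ, if 0 ≤ t then G t * volume (simSet k (r - t)) else 0 := by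
  rw [← lintegral_indicator (measurableSet_simSet _ _)]
  have hmp := (MeasureTheory.volume_preserving_piFinSuccAbove (fun _ : Fin (k+1) => ℝ) 0).symm
  have hmeas : Measurable fun y : Fin (k+1) → ℝ => G (y 0) := hG.comp (measurable_pi_apply 0)
  have key := hmp.lintegral_comp (hmeas.indicator (measurableSet_simSet (k+1) r))
  rw [← key]
  have hsymm : ∀ p : ℝ × (Fin k → ℝ),
      (MeasurableEquiv.piFinSuccAbove (fun _ : Fin (k+1) => ℝ) 0).symm p = Fin.cons p.1 p.2 := by
    intro p
    simp [MeasurableEquiv.piFinSuccAbove, Fin.insertNth_zero, Fin.consEquiv]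
  simp_rw [hsymm]
  rw [Measure.volume_eq_prod, lintegral_prod]
  · refine lintegral_congr fun t => ?_
    dsimp only
    have hmem : ∀ z : Fin k → ℝ, (Fin.cons t z ∈ simSet (k+1) r) ↔
        (0 ≤ t ∧ z ∈ simSet k (r - t)) := by
      intro z
      simp only [simSet, Set.mem_setOf_eq, Fin.forall_fin_succ, Fin.cons_zero, Fin.cons_succ,
        Fin.sum_cons]
      constructor
      · rintro ⟨⟨h0, hi⟩, hs⟩; exact ⟨h0, hi, by linarith⟩
      · rintro ⟨h0, hi, hs⟩; exact ⟨⟨h0, hi⟩, by linarith⟩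
    by_cases ht : 0 ≤ t
    · simp only [ht, if_true]
      have : ∀ z : Fin k → ℝ, (simSet (k+1) r).indicator (fun y => G (y 0)) (Fin.cons t z)
          = (simSet k (r - t)).indicator (fun _ => G t) z := by
        intro z
        classical
        rw [Set.indicator_apply, Set.indicator_apply]
        simp only [hmem, Fin.cons_zero, ht, true_and]
      simp_rw [this]
      rw [lintegral_indicator_const (measurableSet_simSet _ _)]
    · simp only [ht, if_false]
      have : ∀ z : Fin k → ℝ, (simSet (k+1) r).indicator (fun y => G (y 0)) (Fin.cons t z) = 0 := by
        intro z
        classical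
        rw [Set.indicator_apply]
        simp only [hmem, ht, false_and, if_false]
      simp_rw [this]
      exact lintegral_zero
  · exact (hmeas.indicator (measurableSet_simSet _ _)).comp
      (measurable_pi_iff.mpr (fun i => by
        induction i using Fin.cases with
        | zero => simpa using measurable_fst
        | succ i => exact (measurable_pi_apply i).comp measurable_snd)) |>.aemeasurable

lemma volume_simSet (k : ℕ) : ∀ r : ℝ, 0 ≤ r →
    volume (simSet k r) = ENNReal.ofReal (r ^ k / k.factorial) := by
  induction k with
  | zero =>
    intro r hr
    have h : simSet 0 r = Set.univ := by
      ext y; simp [simSet, hr]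
    rw [h]
    simp [MeasureTheory.volume_pi, Measure.pi_univ]
  | succ k ih =>
    intro r hr
    have h1 := lintegral_simSet_succ k r (fun _ => 1) measurable_const
    rw [setLIntegral_one] at h1
    rw [h1]
    have heq : ∀ t : ℝ, (if 0 ≤ t then (1:ℝ≥0∞) * volume (simSet k (r - t)) else 0)
        = Set.indicator (Set.Icc 0 r) (fun t => ENNReal.ofReal ((r - t) ^ k / k.factorial)) t := by
      intro t
      by_cases ht : 0 ≤ t
      · by_cases htr : t ≤ r
        · rw [if_pos ht, one_mul, ih (r - t) (by linarith),
            Set.indicator_of_mem (Set.mem_Icc.mpr ⟨ht, htr⟩)]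
        · rw [if_pos ht, one_mul, simSet_neg (by linarith),
            Set.indicator_of_notMem (by simp [htr])]
          simp
      · rw [if_neg ht, Set.indicator_of_notMem (by simp [ht])]
    simp_rw [heq]
    rw [lintegral_indicator measurableSet_Icc]
    have hint : IntegrableOn (fun t : ℝ => (r - t) ^ k / k.factorial) (Set.Icc 0 r) := by
      apply ContinuousOn.integrableOn_Icc
      fun_prop
    have hnn : 0 ≤ᵐ[volume.restrict (Set.Icc 0 r)] fun t : ℝ => (r - t) ^ k / k.factorial := by
      refine MeasureTheory.ae_restrict_of_forall_mem measurableSet_Icc fun t ht => ?_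
      have : (0:ℝ) ≤ r - t := by linarith [ht.2]
      positivity
    rw [← MeasureTheory.ofReal_integral_eq_lintegral_ofReal hint hnn]
    congr 1
    rw [MeasureTheory.integral_Icc_eq_integral_Ioc, ← intervalIntegral.integral_of_le hr]
    have hc : (∫ t in (0:ℝ)..r, (r - t) ^ k / k.factorial)
        = ∫ t in (0:ℝ)..r, t ^ k / k.factorial := by
      have := intervalIntegral.integral_comp_sub_left (a := (0:ℝ)) (b := r)
        (fun u => u ^ k / (k.factorial : ℝ)) r
      simpa using this
    rw [hc, intervalIntegral.integral_div, integral_pow]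
    field_simp [Nat.factorial_succ]
    rw [zero_pow (Nat.succ_ne_zero k), sub_zero, Nat.factorial_succ]
    push_cast
    ring

lemma lintegral_simSet_slice (k : ℕ) (G : ℝ → ℝ≥0∞) (hG : Measurable G) :
    (∫⁻ y in simSet (k+1) 1, G (y 0)) =
      ∫⁻ t in Set.Ioc (0:ℝ) 1, G t * ENNReal.ofReal ((1 - t) ^ k / k.factorial) := by
  rw [lintegral_simSet_succ k 1 G hG]
  have heq : ∀ t : ℝ, (if 0 ≤ t then G t * volume (simSet k (1 - t)) else 0)
      = Set.indicator (Set.Icc 0 1)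
          (fun t => G t * ENNReal.ofReal ((1 - t) ^ k / k.factorial)) t := by
    intro t
    by_cases ht : 0 ≤ t
    · by_cases htr : t ≤ 1
      · rw [if_pos ht, volume_simSet k (1 - t) (by linarith),
          Set.indicator_of_mem (Set.mem_Icc.mpr ⟨ht, htr⟩)]
      · rw [if_pos ht, simSet_neg (by linarith),
          Set.indicator_of_notMem (by simp [htr])]
        simp
    · rw [if_neg ht, Set.indicator_of_notMem (by simp [ht])]
  simp_rw [heq]
  rw [lintegral_indicator measurableSet_Icc,
    Measure.restrict_congr_set Ioc_ae_eq_Icc]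

lemma swap_aux (f g : ℝ → ℝ≥0∞) (hf : Measurable f) (hg : Measurable g) :
    (∫⁻ t in Set.Ioc (0:ℝ) 1, f t * ∫⁻ s in Set.Icc t 1, g s) =
      ∫⁻ s in Set.Ioc (0:ℝ) 1, (∫⁻ t in Set.Ioc 0 s, f t) * g s := by
  classical
  set R : Set (ℝ × ℝ) := {p | 0 < p.1 ∧ p.1 ≤ p.2 ∧ p.2 ≤ 1} with hR
  have hRm : MeasurableSet R := by
    apply MeasurableSet.inter
    · exact measurableSet_lt measurable_const measurable_fst
    exact (measurableSet_le measurable_fst measurable_snd).inter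
      (measurableSet_le measurable_snd measurable_const)
  set F : ℝ × ℝ → ℝ≥0∞ := R.indicator (fun p => f p.1 * g p.2) with hF
  have hFm : Measurable F :=
    ((hf.comp measurable_fst).mul (hg.comp measurable_snd)).indicator hRm
  have hL : (∫⁻ t in Set.Ioc (0:ℝ) 1, f t * ∫⁻ s in Set.Icc t 1, g s)
      = ∫⁻ p, F p ∂(volume : Measure (ℝ × ℝ)) := by
    rw [Measure.volume_eq_prod, lintegral_prod F hFm.aemeasurable,
      ← lintegral_indicator measurableSet_Ioc]
    refine lintegral_congr fun t => ?_
    rw [Set.indicator_apply]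
    by_cases ht : t ∈ Set.Ioc (0:ℝ) 1
    · rw [if_pos ht]
      have : ∀ s : ℝ, F (t, s) = (Set.Icc t 1).indicator (fun s => f t * g s) s := by
        intro s
        rw [hF, Set.indicator_apply, Set.indicator_apply]
        congr 1
        simp only [hR, Set.mem_setOf_eq, Set.mem_Icc, eq_iff_iff]
        exact ⟨fun h => ⟨h.2.1, h.2.2⟩, fun h => ⟨ht.1, h.1, h.2⟩⟩
      simp_rw [this]
      rw [lintegral_indicator measurableSet_Icc, lintegral_const_mul _ hg]
    · rw [if_neg ht]
      have : ∀ s : ℝ, F (t, s) = 0 := by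
        intro s
        rw [hF, Set.indicator_apply, if_neg]
        simp only [hR, Set.mem_setOf_eq, not_and]
        intro h1 h2
        simp only [Set.mem_Ioc, not_and_or, not_lt, not_le] at ht
        rcases ht with h | h
        · linarith
        · intro; linarith
      simp_rw [this]
      exact lintegral_zero.symm
  have hRt : (∫⁻ s in Set.Ioc (0:ℝ) 1, (∫⁻ t in Set.Ioc 0 s, f t) * g s)
      = ∫⁻ p, F p ∂(volume : Measure (ℝ × ℝ)) := by
    rw [Measure.volume_eq_prod, lintegral_prod_symm F hFm.aemeasurable,
      ← lintegral_indicator measurableSet_Ioc]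
    refine lintegral_congr fun s => ?_
    rw [Set.indicator_apply]
    by_cases hs : s ∈ Set.Ioc (0:ℝ) 1
    · rw [if_pos hs]
      have : ∀ t : ℝ, F (t, s) = (Set.Ioc 0 s).indicator (fun t => f t * g s) t := by
        intro t
        rw [hF, Set.indicator_apply, Set.indicator_apply]
        congr 1
        simp only [hR, Set.mem_setOf_eq, Set.mem_Ioc, eq_iff_iff]
        exact ⟨fun h => ⟨h.1, h.2.1⟩, fun h => ⟨h.1, h.2, hs.2⟩⟩
      simp_rw [this]
      rw [lintegral_indicator measurableSet_Ioc, lintegral_mul_const _ hf]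
    · rw [if_neg hs]
      have : ∀ t : ℝ, F (t, s) = 0 := by
        intro t
        rw [hF, Set.indicator_apply, if_neg]
        simp only [hR, Set.mem_setOf_eq, not_and]
        intro h1 h2
        simp only [Set.mem_Ioc, not_and_or, not_lt, not_le] at hs
        rcases hs with h | h
        · linarith
        · linarith
      simp_rw [this]
      exact lintegral_zero.symm
  rw [hL, hRt]

noncomputable def Hsum (p : ℕ) : ℝ := ∑ j ∈ Finset.range p, (1 : ℝ) / (j + 1)

lemma lintegral_inv_Icc (t : ℝ) (ht : t ∈ Set.Ioc (0:ℝ) 1) :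
    (∫⁻ s in Set.Icc t 1, ENNReal.ofReal s⁻¹) = ENNReal.ofReal (-Real.log t) := by
  rw [← Measure.restrict_congr_set Ioc_ae_eq_Icc]
  have h0 : (0:ℝ) ∉ Set.uIcc t 1 := by
    rw [Set.uIcc_of_le ht.2]
    simp only [Set.mem_Icc, not_and_or, not_le]
    left; exact ht.1
  have hint : IntegrableOn (fun s : ℝ => s⁻¹) (Set.Ioc t 1) := by
    refine (ContinuousOn.integrableOn_Icc ?_).mono_set Set.Ioc_subset_Icc_self
    exact continuousOn_id.inv₀ fun x hx => ne_of_gt (lt_of_lt_of_le ht.1 hx.1)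
  have hnn : 0 ≤ᵐ[volume.restrict (Set.Ioc t 1)] fun s : ℝ => s⁻¹ := by
    refine MeasureTheory.ae_restrict_of_forall_mem measurableSet_Ioc fun s hs => ?_
    have := ht.1.trans hs.1
    positivity
  rw [← MeasureTheory.ofReal_integral_eq_lintegral_ofReal hint hnn]
  congr 1
  rw [← intervalIntegral.integral_of_le ht.2, integral_inv h0, one_div,
    Real.log_inv]

lemma ftc_w (κ : ℕ) (s : ℝ) :
    (∫ t in (0:ℝ)..s, t * (1 - t) ^ κ) =
      (1 - (1 - s) ^ (κ + 1)) / (κ + 1) - (1 - (1 - s) ^ (κ + 2)) / (κ + 2) := by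
  have hderiv : ∀ t : ℝ, HasDerivAt
      (fun t : ℝ => -(1 - t) ^ (κ + 1) / (κ + 1) + (1 - t) ^ (κ + 2) / (κ + 2))
      (t * (1 - t) ^ κ) t := by
    intro t
    have h1 : HasDerivAt (fun t : ℝ => (1 - t)) (-1) t := by
      simpa using (hasDerivAt_id t).const_sub 1
    have h2 := (h1.pow (κ + 1)).div_const ((κ:ℝ) + 1)
    have h3 := (h1.pow (κ + 2)).div_const ((κ:ℝ) + 2)
    have h4 := (h2.neg).add h3
    refine (h4.congr_deriv ?_).congr_of_eventuallyEq (Filter.Eventually.of_forall fun x => ?_)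
    rotate_left
    · simp only [Pi.add_apply, Pi.neg_apply, Pi.pow_apply]; ring
    have hk1 : ((κ:ℝ) + 1) ≠ 0 := by positivity
    have hk2 : ((κ:ℝ) + 2) ≠ 0 := by positivity
    simp only [Nat.add_sub_cancel]
    push_cast
    field_simp
    ring
  rw [intervalIntegral.integral_eq_sub_of_hasDerivAt (fun t _ => hderiv t)
    (by apply Continuous.intervalIntegrable; fun_prop)]
  simp only [sub_zero, one_pow]
  push_cast
  ring

lemma geom_aux (p : ℕ) (s : ℝ) (hs : s ≠ 0) :
    1 - (1 - s) ^ p = s * ∑ j ∈ Finset.range p, (1 - s) ^ j := by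
  have hx : (1 - s) ≠ 1 := fun h => hs (by linarith)
  rw [geom_sum_eq hx, mul_div_assoc', eq_div_iff (by simpa using hs : (1:ℝ) - s - 1 ≠ 0)]
  ring

lemma integral_one_sub_pow (j : ℕ) : (∫ s in (0:ℝ)..1, (1 - s) ^ j) = 1 / (j + 1) := by
  have h := intervalIntegral.integral_comp_sub_left (a := (0:ℝ)) (b := 1)
    (fun u => u ^ j) 1
  simp only [sub_zero, sub_self] at h
  rw [h, integral_pow]
  simp

lemma w_eq (κ : ℕ) (s : ℝ) (hs : s ≠ 0) :
    ((1 - (1 - s) ^ (κ + 1)) / (κ + 1) - (1 - (1 - s) ^ (κ + 2)) / (κ + 2)) * s⁻¹ =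
      (∑ j ∈ Finset.range (κ + 1), (1 - s) ^ j) / (κ + 1) -
        (∑ j ∈ Finset.range (κ + 2), (1 - s) ^ j) / (κ + 2) := by
  rw [geom_aux (κ + 1) s hs, geom_aux (κ + 2) s hs]
  have hk1 : ((κ:ℝ) + 1) ≠ 0 := by positivity
  have hk2 : ((κ:ℝ) + 2) ≠ 0 := by positivity
  push_cast
  field_simp

lemma w_nonneg (κ : ℕ) (s : ℝ) (hs : s ∈ Set.Ioc (0:ℝ) 1) :
    0 ≤ (1 - (1 - s) ^ (κ + 1)) / (κ + 1) - (1 - (1 - s) ^ (κ + 2)) / (κ + 2) := by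
  rw [← ftc_w κ s]
  apply intervalIntegral.integral_nonneg hs.1.le
  intro t ht
  have h1 : (0:ℝ) ≤ 1 - t := by
    have := ht.2.trans hs.2
    linarith
  exact mul_nonneg ht.1 (pow_nonneg h1 κ)

lemma lintegral_J (κ : ℕ) :
    (∫⁻ t in Set.Ioc (0:ℝ) 1, ENNReal.ofReal (-(t * Real.log t) * (1 - t) ^ κ)) =
      ENNReal.ofReal (Hsum (κ + 1) / (κ + 1) - Hsum (κ + 2) / (κ + 2)) := by
  have hfm : Measurable fun t : ℝ => ENNReal.ofReal (t * (1 - t) ^ κ) :=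
    ENNReal.measurable_ofReal.comp (by fun_prop)
  have hgm : Measurable fun s : ℝ => ENNReal.ofReal s⁻¹ :=
    ENNReal.measurable_ofReal.comp measurable_inv
  have step1 : (∫⁻ t in Set.Ioc (0:ℝ) 1, ENNReal.ofReal (-(t * Real.log t) * (1 - t) ^ κ))
      = ∫⁻ t in Set.Ioc (0:ℝ) 1,
          ENNReal.ofReal (t * (1 - t) ^ κ) * ∫⁻ s in Set.Icc t 1, ENNReal.ofReal s⁻¹ := by
    refine setLIntegral_congr_fun measurableSet_Ioc
      (fun t ht => ?_)
    rw [lintegral_inv_Icc t ht]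
    have h1 : (0:ℝ) ≤ t * (1 - t) ^ κ :=
      mul_nonneg ht.1.le (pow_nonneg (by linarith [ht.2]) κ)
    rw [← ENNReal.ofReal_mul h1]
    congr 1
    ring
  rw [step1, swap_aux _ _ hfm hgm]
  have step3 : (∫⁻ s in Set.Ioc (0:ℝ) 1,
        (∫⁻ t in Set.Ioc 0 s, ENNReal.ofReal (t * (1 - t) ^ κ)) * ENNReal.ofReal s⁻¹)
      = ∫⁻ s in Set.Ioc (0:ℝ) 1, ENNReal.ofReal
          ((∑ j ∈ Finset.range (κ + 1), (1 - s) ^ j) / (κ + 1) -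
            (∑ j ∈ Finset.range (κ + 2), (1 - s) ^ j) / (κ + 2)) := by
    refine setLIntegral_congr_fun measurableSet_Ioc
      (fun s hs => ?_)
    have hint : IntegrableOn (fun t : ℝ => t * (1 - t) ^ κ) (Set.Ioc 0 s) := by
      apply Continuous.integrableOn_Ioc
      fun_prop
    have hnn : 0 ≤ᵐ[volume.restrict (Set.Ioc 0 s)] fun t : ℝ => t * (1 - t) ^ κ := by
      refine MeasureTheory.ae_restrict_of_forall_mem measurableSet_Ioc fun t ht => ?_
      exact mul_nonneg ht.1.le (pow_nonneg (by linarith [ht.2.trans hs.2]) κ)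
    rw [← MeasureTheory.ofReal_integral_eq_lintegral_ofReal hint hnn,
      ← intervalIntegral.integral_of_le hs.1.le, ftc_w κ s,
      ← ENNReal.ofReal_mul' (inv_nonneg.mpr hs.1.le), w_eq κ s hs.1.ne']
  rw [step3]
  have hPnn : ∀ s ∈ Set.Ioc (0:ℝ) 1,
      0 ≤ (∑ j ∈ Finset.range (κ + 1), (1 - s) ^ j) / (κ + 1) -
          (∑ j ∈ Finset.range (κ + 2), (1 - s) ^ j) / (κ + 2) := by
    intro s hs
    rw [← w_eq κ s hs.1.ne']
    exact mul_nonneg (w_nonneg κ s hs) (inv_nonneg.mpr hs.1.le)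
  have hPint : IntegrableOn (fun s : ℝ =>
      (∑ j ∈ Finset.range (κ + 1), (1 - s) ^ j) / (κ + 1) -
        (∑ j ∈ Finset.range (κ + 2), (1 - s) ^ j) / (κ + 2)) (Set.Ioc (0:ℝ) 1) := by
    apply Continuous.integrableOn_Ioc
    fun_prop
  rw [← MeasureTheory.ofReal_integral_eq_lintegral_ofReal hPint
    (MeasureTheory.ae_restrict_of_forall_mem measurableSet_Ioc hPnn)]
  congr 1
  rw [← intervalIntegral.integral_of_le (by norm_num : (0:ℝ) ≤ 1)]
  have hi1 : ∀ p : ℕ, (∫ s in (0:ℝ)..1, (∑ j ∈ Finset.range p, (1 - s) ^ j) / (p : ℝ))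
      = Hsum p / p := by
    intro p
    rw [intervalIntegral.integral_div, intervalIntegral.integral_finset_sum
      (fun j _ => (by fun_prop : Continuous fun s : ℝ => (1 - s) ^ j).intervalIntegrable 0 1)]
    congr 1
    rw [Hsum]
    exact Finset.sum_congr rfl fun j _ => integral_one_sub_pow j
  have hsplit : (∫ s in (0:ℝ)..1,
      ((∑ j ∈ Finset.range (κ + 1), (1 - s) ^ j) / (κ + 1) -
        (∑ j ∈ Finset.range (κ + 2), (1 - s) ^ j) / (κ + 2)))
      = (∫ s in (0:ℝ)..1, (∑ j ∈ Finset.range (κ + 1), (1 - s) ^ j) / ((κ + 1 : ℕ) : ℝ))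
        - ∫ s in (0:ℝ)..1, (∑ j ∈ Finset.range (κ + 2), (1 - s) ^ j) / ((κ + 2 : ℕ) : ℝ) := by
    rw [← intervalIntegral.integral_sub]
    · push_cast; rfl
    · apply Continuous.intervalIntegrable; fun_prop
    · apply Continuous.intervalIntegrable; fun_prop
  rw [hsplit, hi1 (κ + 1), hi1 (κ + 2)]
  push_cast
  ring

lemma Hsum_succ (p : ℕ) : Hsum (p + 1) = Hsum p + 1 / (p + 1) := by
  rw [Hsum, Finset.sum_range_succ, Hsum]

lemma Hsum_ge_one (p : ℕ) : 1 ≤ Hsum (p + 1) := by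
  induction p with
  | zero => simp [Hsum]
  | succ p ih =>
    rw [Hsum_succ]
    have h : (0:ℝ) ≤ 1 / ((p + 1 : ℕ) + 1) := by positivity
    linarith

lemma val_eq (κ : ℕ) : Hsum (κ + 1) / (κ + 1) - Hsum (κ + 2) / (κ + 2)
    = (Hsum (κ + 2) - 1) / ((κ + 1) * (κ + 2)) := by
  have h : Hsum (κ + 2) = Hsum (κ + 1) + 1 / ((κ + 1 : ℕ) + 1) := Hsum_succ (κ + 1)
  have hk1 : ((κ:ℝ) + 1) ≠ 0 := by positivity
  have hk2 : ((κ:ℝ) + 2) ≠ 0 := by positivity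
  rw [h]
  push_cast
  field_simp
  ring

lemma bochner_slice (κ : ℕ) (hpos : 0 < κ + 1) :
    (∫ y in simSet (κ + 1) 1, (y ⟨0, hpos⟩ * Real.log (y ⟨0, hpos⟩))) =
      -((Hsum (κ + 2) - 1) / ((κ + 1) * (κ + 2) * κ.factorial)) := by
  have hG : Measurable fun t : ℝ => ENNReal.ofReal (-(t * Real.log t)) :=
    ENNReal.measurable_ofReal.comp (Real.continuous_mul_log.neg.measurable)
  have hmk : (⟨0, hpos⟩ : Fin (κ + 1)) = 0 := rfl
  rw [hmk]
  -- nonnegativity on the set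
  have hnnset : ∀ y ∈ simSet (κ + 1) 1, 0 ≤ -(y 0 * Real.log (y 0)) := by
    intro y hy
    have h0 : 0 ≤ y 0 := hy.1 0
    have h1 : y 0 ≤ 1 := by
      refine le_trans ?_ hy.2
      exact Finset.single_le_sum (fun i _ => hy.1 i) (Finset.mem_univ 0)
    have hlog : Real.log (y 0) ≤ 0 := Real.log_nonpos h0 h1
    have := mul_nonpos_iff.mpr (Or.inr ⟨hlog, h0⟩)
    linarith [mul_nonpos_iff.mpr (Or.inr ⟨hlog, h0⟩)]
  have hmeas : AEStronglyMeasurable (fun y : Fin (κ + 1) → ℝ => -(y 0 * Real.log (y 0)))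
      (volume.restrict (simSet (κ + 1) 1)) :=
    ((Real.continuous_mul_log.comp (continuous_apply 0)).neg).aestronglyMeasurable
  have h1 : (∫ y in simSet (κ + 1) 1, -(y 0 * Real.log (y 0)))
      = (∫⁻ y in simSet (κ + 1) 1, ENNReal.ofReal (-(y 0 * Real.log (y 0)))).toReal := by
    exact MeasureTheory.integral_eq_lintegral_of_nonneg_ae
      (MeasureTheory.ae_restrict_of_forall_mem (measurableSet_simSet _ _) hnnset) hmeas
  have h2 := lintegral_simSet_slice κ (fun t => ENNReal.ofReal (-(t * Real.log t))) hG
  have h3 : (∫⁻ t in Set.Ioc (0:ℝ) 1, ENNReal.ofReal (-(t * Real.log t)) *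
        ENNReal.ofReal ((1 - t) ^ κ / κ.factorial))
      = ∫⁻ t in Set.Ioc (0:ℝ) 1,
          ENNReal.ofReal (-(t * Real.log t) * (1 - t) ^ κ) * ENNReal.ofReal (1 / κ.factorial) := by
    refine setLIntegral_congr_fun measurableSet_Ioc
      (fun t ht => ?_)
    rw [← ENNReal.ofReal_mul' (div_nonneg (pow_nonneg (by linarith [ht.2] : (0:ℝ) ≤ 1 - t) κ)
        (by positivity) : (0:ℝ) ≤ (1 - t) ^ κ / κ.factorial),
      ← ENNReal.ofReal_mul' (by positivity : (0:ℝ) ≤ 1 / (κ.factorial : ℝ))]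
    congr 1
    ring
  rw [h2, h3, lintegral_mul_const _
      ((by fun_prop : Measurable fun t : ℝ => -(t * Real.log t) * (1 - t) ^ κ).ennreal_ofReal),
    lintegral_J κ] at h1
  have hval : 0 ≤ Hsum (κ + 1) / (κ + 1) - Hsum (κ + 2) / (κ + 2) := by
    rw [val_eq κ]
    have h1' : (1:ℝ) ≤ Hsum (κ + 2) := Hsum_ge_one (κ + 1)
    exact div_nonneg (by linarith) (by positivity)
  rw [← ENNReal.ofReal_mul hval, ENNReal.toReal_ofReal (by positivity)] at h1
  have : (∫ y in simSet (κ + 1) 1, (y 0 * Real.log (y 0)))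
      = -(∫ y in simSet (κ + 1) 1, -(y 0 * Real.log (y 0))) := by
    rw [integral_neg, neg_neg]
  rw [this, h1, val_eq κ]
  have hk1 : ((κ:ℝ) + 1) ≠ 0 := by positivity
  have hk2 : ((κ:ℝ) + 2) ≠ 0 := by positivity
  have hkf : ((κ.factorial : ℝ)) ≠ 0 := Nat.cast_ne_zero.mpr κ.factorial_ne_zero
  push_cast
  field_simp

lemma harmC_eq (n : ℕ) (hn : 1 ≤ n) : harmC n = Hsum n - 1 := by
  induction n with
  | zero => omega
  | succ n ih =>
    rcases Nat.eq_or_lt_of_le hn with h | h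
    · simp [← h, harmC, Hsum]
    · have hn1 : 1 ≤ n := by omega
      have h2 : 2 ≤ n + 1 := by omega
      rw [harmC, Finset.sum_Icc_succ_top h2, ← harmC, ih hn1, Hsum_succ]
      push_cast
      ring

lemma main_part1 (n : ℕ) (hn : 1 ≤ n) :
    -((n : ℝ) * simplexIntegral n (fun x => x ⟨0, hn⟩ * Real.log (x ⟨0, hn⟩))) = harmC n := by
  rcases Nat.eq_or_lt_of_le hn with h1 | h2
  · -- n = 1
    subst h1
    simp [simplexIntegral, harmC]
  · -- 2 ≤ n
    obtain ⟨κ, rfl⟩ : ∃ κ, n = κ + 2 := ⟨n - 2, by omega⟩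
    rw [simplexIntegral]
    have h0 : ((⟨0, hn⟩ : Fin (κ + 2)) : ℕ) < κ + 2 - 1 := by
      show (0:ℕ) < κ + 2 - 1
      omega
    simp_rw [dif_pos h0]
    have hset : (∫ y in {y : Fin (κ + 2 - 1) → ℝ | (∀ i, 0 ≤ y i) ∧ ∑ i, y i ≤ 1},
          y ⟨((⟨0, hn⟩ : Fin (κ + 2)) : ℕ), h0⟩ * Real.log (y ⟨((⟨0, hn⟩ : Fin (κ + 2)) : ℕ), h0⟩))
        = ∫ y in simSet (κ + 1) 1, (y ⟨0, Nat.succ_pos κ⟩ * Real.log (y ⟨0, Nat.succ_pos κ⟩)) :=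
      rfl
    rw [hset, bochner_slice κ (Nat.succ_pos κ), harmC_eq (κ + 2) (by omega)]
    have h1' : (1:ℝ) ≤ Hsum (κ + 2) := Hsum_ge_one (κ + 1)
    have hfact : ((κ + 2 - 1).factorial : ℝ) = (κ + 1) * κ.factorial := by
      norm_num [Nat.factorial_succ]
    rw [hfact]
    have hk1 : ((κ:ℝ) + 1) ≠ 0 := by positivity
    have hk2 : ((κ:ℝ) + 2) ≠ 0 := by positivity
    have hkf : ((κ.factorial : ℝ)) ≠ 0 := Nat.cast_ne_zero.mpr κ.factorial_ne_zero
    push_cast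
    field_simp

lemma simplexIntegral_neg (n : ℕ) (f : (Fin n → ℝ) → ℝ) :
    simplexIntegral n (fun x => -(f x)) = -simplexIntegral n f := by
  rw [simplexIntegral, simplexIntegral, ← mul_neg, ← integral_neg]


/-- −n ∫_{Δ_n} x₁ ln x₁ dx = C_n; equivalently F(1,0,…,0) = 0. -/
theorem simplex_integral_x_log_x (n : ℕ) (hn : 1 ≤ n) :
    -((n : ℝ) * simplexIntegral n (fun x => x ⟨0, hn⟩ * Real.log (x ⟨0, hn⟩))) = harmC n ∧
    subF n (fun i => if i = ⟨0, hn⟩ then 1 else 0) = 0 := by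
  refine ⟨main_part1 n hn, ?_⟩
  rw [subF]
  have hsum : (fun x : Fin n → ℝ => eta (∑ i, (if i = ⟨0, hn⟩ then (1:ℝ) else 0) * x i))
      = fun x => -(x ⟨0, hn⟩ * Real.log (x ⟨0, hn⟩)) := by
    funext x
    rw [eta]
    congr 2 <;> simp [ite_mul]
  rw [hsum, simplexIntegral_neg]
  have := main_part1 n hn
  linarith
end

section
/- Subentropy is concave as a function of the density matrix: if ρ_1, …, ρ_m are n×n density matrices and (q_1, …, q_m) is a probability distribution, then Q(Σ_{i=1}^m q_i ρ_i) ≥ Σ_{i=1}^m q_i Q(ρ_i). -/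
open MeasureTheory Matrix
open scoped ComplexOrder

/-! ### Auxiliary material -/

def sset (N : ℕ) : Set (Fin N → ℝ) := {y | (∀ i, 0 ≤ y i) ∧ ∑ i, y i ≤ 1}

noncomputable def coordsMap (N : ℕ) (y : Fin N → ℝ) : Fin (N + 1) → ℝ :=
  fun i => if h : (i : ℕ) < N then y ⟨(i : ℕ), h⟩ else 1 - ∑ j, y j

lemma simplexIntegral_succ (N : ℕ) (f : (Fin (N+1) → ℝ) → ℝ) :
    simplexIntegral (N+1) f = (N.factorial : ℝ) * ∫ y in sset N, f (coordsMap N y) := rfl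

lemma eta_eq : eta = Real.negMulLog := by
  funext y; simp [eta, Real.negMulLog, neg_mul]

lemma isClosed_sset (N : ℕ) : IsClosed (sset N) := by
  have h1 : IsClosed {y : Fin N → ℝ | ∀ i, 0 ≤ y i} := by
    have : {y : Fin N → ℝ | ∀ i, 0 ≤ y i} = ⋂ i, {y | 0 ≤ y i} := by
      ext y; simp [Set.mem_iInter]
    rw [this]
    exact isClosed_iInter fun i => isClosed_le continuous_const (continuous_apply i)
  have h2 : IsClosed {y : Fin N → ℝ | ∑ i, y i ≤ 1} :=
    isClosed_le (by continuity) continuous_const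
  exact h1.inter h2

lemma isCompact_sset (N : ℕ) : IsCompact (sset N) := by
  refine IsCompact.of_isClosed_subset (isCompact_Icc (a := (0 : Fin N → ℝ)) (b := 1))
    (isClosed_sset N) ?_
  intro y hy
  constructor
  · intro i; exact hy.1 i
  · intro i
    calc y i ≤ ∑ j, y j := Finset.single_le_sum (fun j _ => hy.1 j) (Finset.mem_univ i)
    _ ≤ 1 := hy.2

lemma measurableSet_sset (N : ℕ) : MeasurableSet (sset N) := (isClosed_sset N).measurableSet

lemma integrableOn_sset {N : ℕ} {f : (Fin N → ℝ) → ℝ} (hf : Continuous f) :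
    IntegrableOn f (sset N) := hf.continuousOn.integrableOn_compact (isCompact_sset N)

lemma coordsMap_nonneg {N : ℕ} {y : Fin N → ℝ} (hy : y ∈ sset N) (i : Fin (N+1)) :
    0 ≤ coordsMap N y i := by
  unfold coordsMap
  split_ifs with h
  · exact hy.1 _
  · linarith [hy.2]

lemma coordsMap_castSucc {N : ℕ} (y : Fin N → ℝ) (i : Fin N) :
    coordsMap N y i.castSucc = y i := by
  have h : ((i.castSucc : Fin (N+1)) : ℕ) < N := i.isLt
  simp only [coordsMap, dif_pos h]
  congr 1

lemma coordsMap_last {N : ℕ} (y : Fin N → ℝ) :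
    coordsMap N y (Fin.last N) = 1 - ∑ j, y j := by
  simp [coordsMap]

lemma sum_coordsMap {N : ℕ} (y : Fin N → ℝ) : ∑ i, coordsMap N y i = 1 := by
  rw [Fin.sum_univ_castSucc]
  simp only [coordsMap_castSucc, coordsMap_last]
  ring

lemma continuous_coordsMap {N : ℕ} (i : Fin (N+1)) :
    Continuous fun y : Fin N → ℝ => coordsMap N y i := by
  by_cases h : (i : ℕ) < N
  · simp only [coordsMap, dif_pos h]; exact continuous_apply _
  · simp only [coordsMap, dif_neg h]
    exact continuous_const.sub (by continuity)

lemma continuous_dot {N : ℕ} (lam : Fin (N+1) → ℝ) :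
    Continuous fun y : Fin N → ℝ => ∑ i, lam i * coordsMap N y i := by
  apply continuous_finset_sum
  intro i _
  exact continuous_const.mul (continuous_coordsMap i)

lemma continuous_eta_dot {N : ℕ} (lam : Fin (N+1) → ℝ) :
    Continuous fun y : Fin N → ℝ => eta (∑ i, lam i * coordsMap N y i) := by
  rw [eta_eq]
  exact Real.continuous_negMulLog.comp (continuous_dot lam)

lemma le_subF_combo {ι : Type*} [Fintype ι] {n : ℕ} (hn : n ≠ 0)
    (v : ι → Fin n → ℝ) (hv : ∀ k i, 0 ≤ v k i)
    (q : ι → ℝ) (hq : ∀ k, 0 ≤ q k) (hqs : ∑ k, q k = 1) :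
    ∑ k, q k * subF n (v k) ≤ subF n (fun i => ∑ k, q k * v k i) := by
  obtain ⟨N, rfl⟩ := Nat.exists_eq_succ_of_ne_zero hn
  set J : (Fin (N+1) → ℝ) → ℝ :=
    fun w => ∫ y in sset N, eta (∑ i, w i * coordsMap N y i) with hJdef
  have hint : ∀ w : Fin (N+1) → ℝ,
      IntegrableOn (fun y => eta (∑ i, w i * coordsMap N y i)) (sset N) :=
    fun w => integrableOn_sset (continuous_eta_dot w)
  have key : ∑ k, q k * J (v k) ≤ J (fun i => ∑ k, q k * v k i) := by
    have h1 : ∑ k, q k * J (v k)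
        = ∫ y in sset N, ∑ k, q k * eta (∑ i, v k i * coordsMap N y i) := by
      rw [integral_finset_sum _ (fun k _ => ((hint (v k)).const_mul (q k)))]
      simp only [hJdef]
      refine Finset.sum_congr rfl fun k _ => ?_
      rw [MeasureTheory.integral_const_mul]
    rw [h1]
    refine setIntegral_mono_on
      (integrable_finset_sum _ (fun k _ => ((hint (v k)).const_mul (q k))))
      (hint _) (measurableSet_sset N) ?_
    intro y hy
    have hswap : ∑ i, (∑ k, q k * v k i) * coordsMap N y i
        = ∑ k, q k * ∑ i, v k i * coordsMap N y i := by
      simp only [Finset.sum_mul]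
      rw [Finset.sum_comm]
      simp only [Finset.mul_sum, mul_assoc]
    rw [hswap, eta_eq]
    have := Real.concaveOn_negMulLog.le_map_sum (t := Finset.univ)
      (w := q) (p := fun k => ∑ i, v k i * coordsMap N y i)
      (fun k _ => hq k) hqs
      (fun k _ => Finset.sum_nonneg fun i _ =>
        mul_nonneg (hv k i) (coordsMap_nonneg hy i))
    simpa only [smul_eq_mul] using this
  have hsubF : ∀ w : Fin (N+1) → ℝ,
      subF (N+1) w = ((N+1 : ℕ) : ℝ) * ((N.factorial : ℝ) * J w) - harmC (N+1) := by
    intro w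
    rfl
  calc ∑ k, q k * subF (N+1) (v k)
      = (((N+1:ℕ):ℝ) * (N.factorial : ℝ)) * (∑ k, q k * J (v k)) - harmC (N+1) := by
        have h2 : ∀ k ∈ Finset.univ, q k * subF (N+1) (v k) =
            (((N+1:ℕ):ℝ) * (N.factorial : ℝ)) * (q k * J (v k)) - q k * harmC (N+1) := by
          intro k _; rw [hsubF]; ring
        rw [Finset.sum_congr rfl h2, Finset.sum_sub_distrib, ← Finset.mul_sum,
          ← Finset.sum_mul, hqs, one_mul]
    _ ≤ (((N+1:ℕ):ℝ) * (N.factorial : ℝ)) * (J (fun i => ∑ k, q k * v k i)) - harmC (N+1) := by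
        refine sub_le_sub_right (mul_le_mul_of_nonneg_left key ?_) _
        positivity
    _ = subF (N+1) (fun i => ∑ k, q k * v k i) := by rw [hsubF]; ring

/-! ### Symmetry of `subF` under permutations -/

section Symmetry

variable {N : ℕ}

/-- The general change-of-variables lemma on the simplex-chart set. -/
lemma setIntegral_comp_involutive (f : (Fin N → ℝ) → (Fin N → ℝ))
    (hinv : Function.Involutive f) (hcont : Continuous f)
    (hmp : MeasurePreserving f volume volume)
    (hS : ∀ y ∈ sset N, f y ∈ sset N) (g : (Fin N → ℝ) → ℝ) :
    ∫ y in sset N, g (f y) = ∫ y in sset N, g y := by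
  have hemb : MeasurableEmbedding f := by
    have : MeasurableEmbedding (⇑(MeasurableEquiv.mk (hinv.toPerm f)
        (by rw [Function.Involutive.coe_toPerm]; exact hcont.measurable)
        (by rw [hinv.toPerm_symm, Function.Involutive.coe_toPerm]
            exact hcont.measurable))) :=
      MeasurableEquiv.measurableEmbedding _
    simpa [MeasurableEquiv.coe_mk, Function.Involutive.coe_toPerm] using this
  have hpre : f ⁻¹' (sset N) = sset N := by
    apply subset_antisymm
    · intro y hy
      have : f (f y) ∈ sset N := hS _ hy
      rwa [hinv y] at this
    · intro y hy
      exact hS y hy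
  have := hmp.setIntegral_preimage_emb hemb g (sset N)
  rwa [hpre] at this

lemma measurePreserving_linear_involutive (L : (Fin N → ℝ) →ₗ[ℝ] (Fin N → ℝ))
    (h : ∀ y, L (L y) = y) : MeasurePreserving (⇑L) volume volume := by
  have hLL : L.comp L = LinearMap.id := LinearMap.ext fun y => by simpa using h y
  have hdet2 : LinearMap.det L * LinearMap.det L = 1 := by
    rw [← LinearMap.det_comp, hLL, LinearMap.det_id]
  have hdet_ne : LinearMap.det L ≠ 0 := by
    intro h0; rw [h0, zero_mul] at hdet2; exact zero_ne_one hdet2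
  have habs : |LinearMap.det L| = 1 := by
    rcases mul_self_eq_one_iff.mp hdet2 with h1 | h1 <;> rw [h1] <;> norm_num
  have hmap := Real.map_linearMap_volume_pi_eq_smul_volume_pi hdet_ne
  rw [abs_inv, habs] at hmap
  simp only [inv_one, ENNReal.ofReal_one, one_smul] at hmap
  exact ⟨(LinearMap.continuous_of_finiteDimensional L).measurable, hmap⟩

/-- The "swap a coordinate with the implicit last coordinate" map. -/
noncomputable def Tmap (N : ℕ) (k : Fin N) (y : Fin N → ℝ) : Fin N → ℝ :=
  fun i => if i = k then 1 - ∑ j, y j else y i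

lemma sum_Tmap (k : Fin N) (y : Fin N → ℝ) : ∑ i, Tmap N k y i = 1 - y k := by
  have h : Tmap N k y = Function.update y k (1 - ∑ j, y j) := by
    funext i; simp [Tmap, Function.update_apply]
  rw [h, Finset.sum_update_of_mem (Finset.mem_univ k),
    Finset.sdiff_singleton_eq_erase, Finset.sum_erase_eq_sub (Finset.mem_univ k)]
  ring

lemma Tmap_involutive (k : Fin N) : Function.Involutive (Tmap N k) := by
  intro y
  funext i
  by_cases hik : i = k
  · rw [hik]
    have h1 : Tmap N k (Tmap N k y) k = 1 - ∑ j, Tmap N k y j := if_pos rfl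
    rw [h1, sum_Tmap]; ring
  · simp only [Tmap, if_neg hik]

lemma Tmap_continuous (k : Fin N) : Continuous (Tmap N k) := by
  apply continuous_pi
  intro i
  by_cases hik : i = k
  · subst hik
    simp only [Tmap, if_pos rfl]
    exact continuous_const.sub (by continuity)
  · simp only [Tmap, if_neg hik]
    exact continuous_apply i

lemma Tmap_measurePreserving (k : Fin N) : MeasurePreserving (Tmap N k) volume volume := by
  classical
  let L : (Fin N → ℝ) →ₗ[ℝ] (Fin N → ℝ) :=
    { toFun := fun y i => if i = k then -∑ j, y j else y i
      map_add' := by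
        intro y z; funext i
        by_cases hik : i = k <;> simp [hik, Finset.sum_add_distrib] <;> ring
      map_smul' := by
        intro c y; funext i
        by_cases hik : i = k <;> simp [hik, Finset.mul_sum] }
  have hLapp : ∀ y i, L y i = if i = k then -∑ j, y j else y i := fun y i => rfl
  have hLsum : ∀ y, ∑ i, L y i = - y k := by
    intro y
    have h : (L y : Fin N → ℝ) = Function.update y k (-∑ j, y j) := by
      funext i; simp [hLapp, Function.update_apply]
    rw [h, Finset.sum_update_of_mem (Finset.mem_univ k),
      Finset.sdiff_singleton_eq_erase, Finset.sum_erase_eq_sub (Finset.mem_univ k)]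
    ring
  have hLL : ∀ y, L (L y) = y := by
    intro y; funext i
    by_cases hik : i = k
    · subst hik
      rw [hLapp, if_pos rfl, hLsum]; ring
    · rw [hLapp, if_neg hik, hLapp, if_neg hik]
  have hmpL := measurePreserving_linear_involutive L hLL
  have hmpT : MeasurePreserving (fun y : Fin N → ℝ => y + Pi.single k 1) volume volume :=
    ⟨measurable_id.add_const _, map_add_right_eq_self volume _⟩
  have hT : Tmap N k = (fun y : Fin N → ℝ => y + Pi.single k 1) ∘ ⇑L := by
    funext y i
    by_cases hik : i = k
    · subst hik
      simp [Tmap, hLapp]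
      ring
    · simp [Tmap, hik, hLapp, Pi.single_apply]
  rw [hT]
  exact hmpT.comp hmpL

lemma Tmap_mem_sset (k : Fin N) {y : Fin N → ℝ} (hy : y ∈ sset N) : Tmap N k y ∈ sset N := by
  constructor
  · intro i
    by_cases hik : i = k
    · simp only [Tmap, if_pos hik]
      linarith [hy.2]
    · simp only [Tmap, if_neg hik]
      exact hy.1 i
  · rw [sum_Tmap]
    linarith [hy.1 k]

def GoodPerm (N : ℕ) (σ : Equiv.Perm (Fin (N+1))) : Prop :=
  ∀ lam : Fin (N+1) → ℝ,
    (∫ y in sset N, eta (∑ j, lam j * coordsMap N y (σ j))) =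
    ∫ y in sset N, eta (∑ j, lam j * coordsMap N y j)

lemma goodPerm_one : GoodPerm N 1 := fun lam => by simp

lemma goodPerm_mul {σ τ : Equiv.Perm (Fin (N+1))} (hσ : GoodPerm N σ) (hτ : GoodPerm N τ) :
    GoodPerm N (σ * τ) := by
  intro lam
  have h1 : ∀ y : Fin N → ℝ, ∑ j, lam j * coordsMap N y ((σ * τ) j)
      = ∑ j, lam (τ.symm j) * coordsMap N y (σ j) := by
    intro y
    exact Fintype.sum_equiv τ _ _ (fun j => by simp)
  have h2 : ∀ y : Fin N → ℝ, ∑ j, lam (τ.symm j) * coordsMap N y j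
      = ∑ j, lam j * coordsMap N y (τ j) := by
    intro y
    exact (Fintype.sum_equiv τ (fun j => lam j * coordsMap N y (τ j))
      (fun j => lam (τ.symm j) * coordsMap N y j) (fun j => by simp)).symm
  calc (∫ y in sset N, eta (∑ j, lam j * coordsMap N y ((σ * τ) j)))
      = ∫ y in sset N, eta (∑ j, lam (τ.symm j) * coordsMap N y (σ j)) := by
        congr 1; funext y; rw [h1]
    _ = ∫ y in sset N, eta (∑ j, lam (τ.symm j) * coordsMap N y j) := hσ _
    _ = ∫ y in sset N, eta (∑ j, lam j * coordsMap N y (τ j)) := by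
        congr 1; funext y; rw [h2]
    _ = ∫ y in sset N, eta (∑ j, lam j * coordsMap N y j) := hτ _

lemma coordsMap_swap_castSucc (a b : Fin N) (y : Fin N → ℝ) (j : Fin (N+1)) :
    coordsMap N y (Equiv.swap a.castSucc b.castSucc j)
      = coordsMap N (y ∘ Equiv.swap a b) j := by
  induction j using Fin.lastCases with
  | last =>
    rw [Equiv.swap_apply_of_ne_of_ne (Fin.castSucc_lt_last a).ne'
      (Fin.castSucc_lt_last b).ne']
    rw [coordsMap_last, coordsMap_last]
    congr 1
    exact (Equiv.sum_comp (Equiv.swap a b) y).symm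
  | cast c =>
    rw [Fin.castSucc_injective N |>.swap_apply a b c, coordsMap_castSucc,
      coordsMap_castSucc]
    rfl

lemma coordsMap_swap_last (k : Fin N) (y : Fin N → ℝ) (j : Fin (N+1)) :
    coordsMap N y (Equiv.swap k.castSucc (Fin.last N) j)
      = coordsMap N (Tmap N k y) j := by
  induction j using Fin.lastCases with
  | last =>
    rw [Equiv.swap_apply_right, coordsMap_castSucc, coordsMap_last, sum_Tmap]
    ring
  | cast c =>
    by_cases hck : c = k
    · rw [hck, Equiv.swap_apply_left, coordsMap_last, coordsMap_castSucc]
      exact (if_pos rfl).symm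
    · rw [Equiv.swap_apply_of_ne_of_ne
        (fun h => hck (Fin.castSucc_injective N h)) (Fin.castSucc_lt_last c).ne,
        coordsMap_castSucc, coordsMap_castSucc]
      exact (if_neg hck).symm

lemma goodPerm_swap_castSucc (a b : Fin N) :
    GoodPerm N (Equiv.swap a.castSucc b.castSucc) := by
  intro lam
  have key : ∀ y : Fin N → ℝ,
      eta (∑ j, lam j * coordsMap N y (Equiv.swap a.castSucc b.castSucc j))
        = eta (∑ j, lam j * coordsMap N (y ∘ Equiv.swap a b) j) := by
    intro y; congr 1
    exact Finset.sum_congr rfl fun j _ => by rw [coordsMap_swap_castSucc]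
  have h1 : (∫ y in sset N, eta (∑ j, lam j * coordsMap N y
      (Equiv.swap a.castSucc b.castSucc j)))
      = ∫ y in sset N, eta (∑ j, lam j * coordsMap N (y ∘ Equiv.swap a b) j) := by
    congr 1; funext y; exact key y
  rw [h1]
  -- change of variables y ↦ y ∘ swap a b
  have hinv : Function.Involutive (fun y : Fin N → ℝ => y ∘ Equiv.swap a b) := by
    intro y; funext i; simp [Function.comp]
  have hlin : MeasurePreserving (fun y : Fin N → ℝ => y ∘ Equiv.swap a b)
      volume volume := by
    refine measurePreserving_linear_involutive
      { toFun := fun y => y ∘ Equiv.swap a b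
        map_add' := fun y z => rfl
        map_smul' := fun c y => rfl } ?_
    intro y; funext i; simp [Function.comp]
  have hcont : Continuous (fun y : Fin N → ℝ => y ∘ Equiv.swap a b) := by
    apply continuous_pi; intro i; exact continuous_apply _
  have hstab : ∀ y ∈ sset N, (y ∘ Equiv.swap a b) ∈ sset N := by
    intro y hy
    refine ⟨fun i => hy.1 _, ?_⟩
    have hsum := Equiv.sum_comp (Equiv.swap a b) y
    simp only [Function.comp]
    rw [hsum]
    exact hy.2
  exact setIntegral_comp_involutive _ hinv hcont hlin hstab
    (fun z => eta (∑ j, lam j * coordsMap N z j))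

lemma goodPerm_swap_last (k : Fin N) :
    GoodPerm N (Equiv.swap k.castSucc (Fin.last N)) := by
  intro lam
  have h1 : (∫ y in sset N, eta (∑ j, lam j * coordsMap N y
      (Equiv.swap k.castSucc (Fin.last N) j)))
      = ∫ y in sset N, eta (∑ j, lam j * coordsMap N (Tmap N k y) j) := by
    congr 1; funext y; congr 1
    exact Finset.sum_congr rfl fun j _ => by rw [coordsMap_swap_last]
  rw [h1]
  exact setIntegral_comp_involutive _ (Tmap_involutive k) (Tmap_continuous k)
    (Tmap_measurePreserving k) (fun y hy => Tmap_mem_sset k hy)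
    (fun z => eta (∑ j, lam j * coordsMap N z j))

lemma goodPerm_swap (x y : Fin (N+1)) : GoodPerm N (Equiv.swap x y) := by
  by_cases hx : x = Fin.last N
  · by_cases hy : y = Fin.last N
    · rw [hx, hy, Equiv.swap_self]
      exact goodPerm_one
    · obtain ⟨b, rfl⟩ := Fin.eq_castSucc_of_ne_last hy
      rw [hx, Equiv.swap_comm]
      exact goodPerm_swap_last b
  · obtain ⟨a, rfl⟩ := Fin.eq_castSucc_of_ne_last hx
    by_cases hy : y = Fin.last N
    · rw [hy]
      exact goodPerm_swap_last a
    · obtain ⟨b, rfl⟩ := Fin.eq_castSucc_of_ne_last hy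
      exact goodPerm_swap_castSucc a b

lemma goodPerm_all (σ : Equiv.Perm (Fin (N+1))) : GoodPerm N σ := by
  refine Equiv.Perm.swap_induction_on σ goodPerm_one ?_
  intro f x y _ hP
  exact goodPerm_mul (goodPerm_swap x y) hP

end Symmetry

lemma subF_perm {n : ℕ} (lam : Fin n → ℝ) (σ : Equiv.Perm (Fin n)) :
    subF n (fun i => lam (σ i)) = subF n lam := by
  rcases n with _ | N
  · have : (fun i => lam (σ i)) = lam := funext fun i => i.elim0
    rw [this]
  · unfold subF
    congr 2
    rw [simplexIntegral_succ, simplexIntegral_succ]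
    congr 1
    have h1 : ∀ y : Fin N → ℝ, ∑ i, lam (σ i) * coordsMap N y i
        = ∑ j, lam j * coordsMap N y (σ.symm j) := by
      intro y
      exact Fintype.sum_equiv σ (fun i => lam (σ i) * coordsMap N y i)
        (fun j => lam j * coordsMap N y (σ.symm j)) (fun i => by simp) |>.symm
        |>.symm
    have h2 : (∫ y in sset N, eta (∑ i, lam (σ i) * coordsMap N y i))
        = ∫ y in sset N, eta (∑ j, lam j * coordsMap N y (σ.symm j)) := by
      congr 1; funext y; rw [h1]
    rw [h2]
    exact goodPerm_all σ.symm lam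

/-! ### Matrix lemmas -/

lemma diag_conj_entry {n : ℕ} (W : Matrix (Fin n) (Fin n) ℂ) (d : Fin n → ℝ) (j : Fin n) :
    (star W * Matrix.diagonal (fun k => (d k : ℂ)) * W) j j
      = ((∑ k, d k * Complex.normSq (W k j) : ℝ) : ℂ) := by
  rw [Matrix.mul_apply]
  push_cast
  refine Finset.sum_congr rfl fun k _ => ?_
  rw [Matrix.mul_diagonal, Matrix.star_apply, Complex.star_def,
    Complex.normSq_eq_conj_mul_self]
  ring

lemma unitary_row_sums {n : ℕ} {W : Matrix (Fin n) (Fin n) ℂ}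
    (h : star W * W = 1) (j : Fin n) : ∑ k, Complex.normSq (W k j) = 1 := by
  have h1 : (star W * W) j j = 1 := by rw [h]; simp
  rw [Matrix.mul_apply] at h1
  have h2 : ∀ k, (star W) j k * W k j = ((Complex.normSq (W k j) : ℝ) : ℂ) := by
    intro k
    rw [Matrix.star_apply, Complex.star_def, ← Complex.normSq_eq_conj_mul_self]
  rw [Finset.sum_congr rfl (fun k _ => h2 k)] at h1
  have h3 : ((∑ k, Complex.normSq (W k j) : ℝ) : ℂ) = ((1 : ℝ) : ℂ) := by
    push_cast
    rw [h1]
  exact_mod_cast h3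

lemma unitary_col_sums {n : ℕ} {W : Matrix (Fin n) (Fin n) ℂ}
    (h : W * star W = 1) (k : Fin n) : ∑ j, Complex.normSq (W k j) = 1 := by
  have h1 : (W * star W) k k = 1 := by rw [h]; simp
  rw [Matrix.mul_apply] at h1
  have h2 : ∀ j, W k j * (star W) j k = ((Complex.normSq (W k j) : ℝ) : ℂ) := by
    intro j
    rw [Matrix.star_apply, Complex.star_def, Complex.mul_conj]
  rw [Finset.sum_congr rfl (fun j _ => h2 j)] at h1
  have h3 : ((∑ j, Complex.normSq (W k j) : ℝ) : ℂ) = ((1 : ℝ) : ℂ) := by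
    push_cast
    rw [h1]
  exact_mod_cast h3

/-- subentropy is concave as a function of the density matrix. -/
theorem subentropy_concave (n m : ℕ) (ρ : Fin m → Matrix (Fin n) (Fin n) ℂ)
    (hρ : ∀ i, (ρ i).PosSemidef) (ht : ∀ i, (ρ i).trace = 1)
    (q : Fin m → ℝ) (hq : ∀ i, 0 ≤ q i) (hqs : ∑ i, q i = 1) :
    Qmat (∑ i, (q i : ℂ) • ρ i) ≥ ∑ i, q i * Qmat (ρ i) := by
  classical
  -- the dimension is positive
  have hm : m ≠ 0 := by
    intro h
    subst h
    simp at hqs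
  have hn : n ≠ 0 := by
    intro h
    subst h
    have := ht ⟨0, Nat.pos_of_ne_zero hm⟩
    simp [Matrix.trace] at this
  set A : Matrix (Fin n) (Fin n) ℂ := ∑ i, (q i : ℂ) • ρ i with hA
  have hAH : A.IsHermitian := by
    unfold Matrix.IsHermitian
    rw [hA, Matrix.conjTranspose_sum]
    refine Finset.sum_congr rfl fun i _ => ?_
    rw [Matrix.conjTranspose_smul, (hρ i).1]
    congr 1
    simp [Complex.star_def, Complex.conj_ofReal]
  -- notation
  set U : Matrix (Fin n) (Fin n) ℂ := (hAH.eigenvectorUnitary : Matrix (Fin n) (Fin n) ℂ)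
    with hU
  have hUsU : star U * U = 1 := Matrix.mem_unitaryGroup_iff'.mp hAH.eigenvectorUnitary.2
  have hUUs : U * star U = 1 := Matrix.mem_unitaryGroup_iff.mp hAH.eigenvectorUnitary.2
  set V : Fin m → Matrix (Fin n) (Fin n) ℂ :=
    fun i => ((hρ i).1.eigenvectorUnitary : Matrix (Fin n) (Fin n) ℂ) with hV
  have hVsV : ∀ i, star (V i) * V i = 1 :=
    fun i => Matrix.mem_unitaryGroup_iff'.mp (hρ i).1.eigenvectorUnitary.2
  have hVVs : ∀ i, V i * star (V i) = 1 :=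
    fun i => Matrix.mem_unitaryGroup_iff.mp (hρ i).1.eigenvectorUnitary.2
  set W : Fin m → Matrix (Fin n) (Fin n) ℂ := fun i => star (V i) * U with hW
  have hWsW : ∀ i, star (W i) * W i = 1 := by
    intro i
    rw [hW]
    simp only [Matrix.star_mul, star_star]
    calc (star U * V i) * (star (V i) * U)
        = star U * (V i * star (V i)) * U := by
          simp only [Matrix.mul_assoc]
      _ = 1 := by rw [hVVs i, Matrix.mul_one, hUsU]
  have hWWs : ∀ i, W i * star (W i) = 1 := by
    intro i
    rw [hW]
    simp only [Matrix.star_mul, star_star]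
    calc (star (V i) * U) * (star U * V i)
        = star (V i) * (U * star U) * V i := by
          simp only [Matrix.mul_assoc]
      _ = 1 := by rw [hUUs, Matrix.mul_one, hVsV i]
  -- the doubly stochastic matrices
  set B : Fin m → Matrix (Fin n) (Fin n) ℝ :=
    fun i j k => Complex.normSq (W i k j) with hBdef
  have hBds : ∀ i, B i ∈ doublyStochastic ℝ (Fin n) := by
    intro i
    rw [mem_doublyStochastic_iff_sum]
    refine ⟨fun j k => Complex.normSq_nonneg _, ?_, ?_⟩
    · intro j
      exact unitary_row_sums (hWsW i) j
    · intro k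
      exact unitary_col_sums (hWWs i) k
  -- eigenvalues
  set lamA : Fin n → ℝ := hAH.eigenvalues with hlamA
  set ev : Fin m → Fin n → ℝ := fun i => (hρ i).1.eigenvalues with hev
  have hev0 : ∀ i k, 0 ≤ ev i k := fun i k => (hρ i).eigenvalues_nonneg k
  set d : Fin m → Fin n → ℝ := fun i j => ∑ k, ev i k * Complex.normSq (W i k j) with hd
  have hd0 : ∀ i j, 0 ≤ d i j :=
    fun i j => Finset.sum_nonneg fun k _ =>
      mul_nonneg (hev0 i k) (Complex.normSq_nonneg _)
  -- conjugated spectral decompositions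
  have hconj : ∀ i, star U * ρ i * U
      = star (W i) * Matrix.diagonal (fun k => ((ev i k : ℝ) : ℂ)) * W i := by
    intro i
    conv_lhs => rw [(hρ i).1.spectral_theorem, Unitary.conjStarAlgAut_apply]
    rw [hW]
    simp only [Matrix.star_mul, star_star]
    simp only [Matrix.mul_assoc]
    rfl
  -- the key eigenvalue identity
  have hkey : ∀ j, lamA j = ∑ i, q i * d i j := by
    intro j
    have h1 : star U * A * U = Matrix.diagonal (RCLike.ofReal ∘ lamA) :=
      by have := hAH.conjStarAlgAut_star_eigenvectorUnitary; rw [Unitary.conjStarAlgAut_apply, Unitary.coe_star, star_star] at this; exact this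
    have h2 : star U * A * U = ∑ i, (q i : ℂ) • (star U * ρ i * U) := by
      rw [hA, Finset.mul_sum, Finset.sum_mul]
      refine Finset.sum_congr rfl fun i _ => ?_
      rw [Matrix.mul_smul, Matrix.smul_mul]
    have h3 : (star U * A * U) j j = ((lamA j : ℝ) : ℂ) := by
      rw [h1]
      simp [Matrix.diagonal_apply_eq]
    have h4 : (star U * A * U) j j = ((∑ i, q i * d i j : ℝ) : ℂ) := by
      rw [h2, Matrix.sum_apply]
      have hterm : ∀ i, ((q i : ℂ) • (star U * ρ i * U)) j j
          = ((q i * d i j : ℝ) : ℂ) := by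
        intro i
        rw [Matrix.smul_apply, hconj i, diag_conj_entry, smul_eq_mul]
        have hdij : d i j = ∑ k, ev i k * Complex.normSq (W i k j) := rfl
        rw [hdij]
        push_cast
        ring
      rw [Finset.sum_congr rfl fun i _ => hterm i]
      push_cast
      ring
    rw [h3] at h4
    exact_mod_cast h4
  -- Birkhoff decompositions
  have hBirk : ∀ i, ∃ w : Equiv.Perm (Fin n) → ℝ, (∀ σ, 0 ≤ w σ) ∧ ∑ σ, w σ = 1 ∧
      ∀ j, d i j = ∑ σ, w σ * ev i (σ j) := by
    intro i
    obtain ⟨w, hw0, hw1, hwB⟩ := exists_eq_sum_perm_of_mem_doublyStochastic (hBds i)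
    refine ⟨w, hw0, hw1, fun j => ?_⟩
    have hBapp : ∀ k, B i j k = ∑ σ : Equiv.Perm (Fin n), w σ * (σ.permMatrix ℝ) j k := by
      intro k
      rw [← hwB]
      simp [Matrix.sum_apply]
    calc d i j = ∑ k, ev i k * B i j k := rfl
      _ = ∑ k, ∑ σ : Equiv.Perm (Fin n), w σ * ((σ.permMatrix ℝ) j k * ev i k) := by
          refine Finset.sum_congr rfl fun k _ => ?_
          rw [hBapp k, Finset.mul_sum]
          refine Finset.sum_congr rfl fun σ _ => ?_
          ring
      _ = ∑ σ : Equiv.Perm (Fin n), w σ * ∑ k, ((σ.permMatrix ℝ) j k * ev i k) := by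
          rw [Finset.sum_comm]
          simp [Finset.mul_sum]
      _ = ∑ σ : Equiv.Perm (Fin n), w σ * ev i (σ j) := by
          refine Finset.sum_congr rfl fun σ _ => ?_
          congr 1
          have : ∀ k, (σ.permMatrix ℝ) j k * ev i k
              = if σ j = k then ev i k else 0 := by
            intro k
            simp [Equiv.Perm.permMatrix, PEquiv.toMatrix_apply, Equiv.toPEquiv_apply,
              ite_mul]
          rw [Finset.sum_congr rfl fun k _ => this k]
          simp
  -- transport along the equivalence `e`
  set c : ℕ := Fintype.card (Fin n) with hc
  set e : Fin n ≃ Fin c := Fintype.equivFin (Fin n) with he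
  have hcne : c ≠ 0 := by
    rw [hc, Fintype.card_fin]
    exact hn
  set μA : Fin c → ℝ := fun t => lamA (e.symm t) with hμA
  set μ : Fin m → Fin c → ℝ := fun i t => ev i (e.symm t) with hμ
  set δ : Fin m → Fin c → ℝ := fun i t => d i (e.symm t) with hδ
  -- step 1 : concavity over the density matrices
  have step1 : ∑ i, q i * subF c (δ i) ≤ subF c μA := by
    have h := le_subF_combo hcne δ (fun i t => hd0 i _) q hq hqs
    have heq : (fun t => ∑ i, q i * δ i t) = μA :=
      funext fun t => (hkey (e.symm t)).symm
    rwa [heq] at h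
  -- step 2 : Schur-type inequality via Birkhoff
  have step2 : ∀ i, subF c (μ i) ≤ subF c (δ i) := by
    intro i
    obtain ⟨w, hw0, hw1, hwd⟩ := hBirk i
    have hδeq : δ i = fun t => ∑ σ : Equiv.Perm (Fin n),
        w σ * (fun s => μ i ((e.symm.trans ((σ : Equiv.Perm (Fin n)).trans e)) s)) t := by
      funext t
      show d i (e.symm t) = _
      rw [hwd]
      refine Finset.sum_congr rfl fun σ _ => ?_
      simp [hμ, Equiv.trans_apply]
    have hjensen := le_subF_combo hcne
      (fun σ : Equiv.Perm (Fin n) =>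
        (fun s => μ i ((e.symm.trans ((σ : Equiv.Perm (Fin n)).trans e)) s)))
      (fun σ t => hev0 i _) w hw0 hw1
    have hperm : ∀ σ : Equiv.Perm (Fin n),
        subF c (fun s => μ i ((e.symm.trans ((σ : Equiv.Perm (Fin n)).trans e)) s))
          = subF c (μ i) := by
      intro σ
      exact subF_perm (μ i) ((e.symm.trans (σ.trans e)) : Equiv.Perm (Fin c))
    calc subF c (μ i)
        = ∑ σ : Equiv.Perm (Fin n), w σ * subF c (μ i) := by
          rw [← Finset.sum_mul, hw1, one_mul]
      _ = ∑ σ : Equiv.Perm (Fin n), w σ *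
            subF c (fun s => μ i ((e.symm.trans ((σ : Equiv.Perm (Fin n)).trans e)) s)) := by
          refine Finset.sum_congr rfl fun σ _ => ?_
          rw [hperm σ]
      _ ≤ subF c (fun t => ∑ σ : Equiv.Perm (Fin n),
            w σ * (fun s => μ i ((e.symm.trans ((σ : Equiv.Perm (Fin n)).trans e)) s)) t) :=
          hjensen
      _ = subF c (δ i) := by rw [← hδeq]
  -- assemble
  have hQA : Qmat A = subF c μA := by
    unfold Qmat
    rw [dif_pos hAH]
  have hQρ : ∀ i, Qmat (ρ i) = subF c (μ i) := by
    intro i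
    unfold Qmat
    rw [dif_pos (hρ i).1]
  rw [ge_iff_le, hQA]
  calc ∑ i, q i * Qmat (ρ i) = ∑ i, q i * subF c (μ i) := by
        refine Finset.sum_congr rfl fun i _ => ?_
        rw [hQρ i]
    _ ≤ ∑ i, q i * subF c (δ i) :=
        Finset.sum_le_sum fun i _ => mul_le_mul_of_nonneg_left (step2 i) (hq i)
    _ ≤ subF c μA := step1
end
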